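/- arXiv:0802.1506 — 4 statements merged into one kernel-verified Lean document; each statement's English description precedes it below -/
import Mathlib

section
/- The number of rooted spanning forests of the complete graph on n labeled vertices with exactly r trees (each tree having a distinguished root) equals binomial(n-1, r-1) * n^(n-r). -/
namespace RFC

variable {V : Type*}

/-- `Good f` : every point is eventually fixed under iteration of `f`. -/
def Good (f : V → V) : Prop := ∀ v, ∃ k, f (f^[k] v) = f^[k] v

variable {f : V → V}

open Classical in
/-- height: least `k` with `f^[k] v` fixed. -/
noncomputable def hgt (hf : Good f) (v : V) : ℕ := Nat.find (hf v)

noncomputable def fend (hf : Good f) (v : V) : V := f^[hgt hf v] v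

theorem fend_fixed (hf : Good f) (v : V) : f (fend hf v) = fend hf v := by
  classical exact Nat.find_spec (hf v)

theorem hgt_le (hf : Good f) {v : V} {k : ℕ} (h : f (f^[k] v) = f^[k] v) :
    hgt hf v ≤ k := by classical exact Nat.find_le h

theorem hgt_eq_zero_iff (hf : Good f) {v : V} : hgt hf v = 0 ↔ f v = v := by
  constructor
  · intro h
    have := fend_fixed hf v
    rw [fend, h] at this
    simpa using this
  · intro h
    exact Nat.le_zero.mp (hgt_le hf (by simpa using h))

theorem iterate_fixed_of_fixed {v : V} (h : f v = v) (k : ℕ) : f^[k] v = v :=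
  Function.iterate_fixed h k

theorem hgt_fval (hf : Good f) {v : V} (h : f v ≠ v) :
    hgt hf (f v) + 1 = hgt hf v := by
  have hpos : 0 < hgt hf v := Nat.pos_of_ne_zero (fun h0 => h ((hgt_eq_zero_iff hf).mp h0))
  -- hgt v ≤ hgt (f v) + 1
  have h1 : hgt hf v ≤ hgt hf (f v) + 1 := by
    apply hgt_le
    rw [Function.iterate_succ_apply]
    exact fend_fixed hf (f v)
  have h2 : hgt hf (f v) ≤ hgt hf v - 1 := by
    apply hgt_le
    have : f^[hgt hf v - 1] (f v) = f^[hgt hf v] v := by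
      rw [← Function.iterate_succ_apply, Nat.succ_eq_add_one, Nat.sub_add_cancel hpos]
    rw [this]
    exact fend_fixed hf v
  omega

theorem hgt_fval_lt (hf : Good f) {v : V} (h : f v ≠ v) :
    hgt hf (f v) < hgt hf v := by
  have := hgt_fval hf h
  omega

theorem fend_fval (hf : Good f) (v : V) : fend hf (f v) = fend hf v := by
  by_cases h : f v = v
  · rw [h]
  · rw [fend, fend, ← hgt_fval hf h, Function.iterate_succ_apply]

theorem fend_iterate (hf : Good f) (v : V) (k : ℕ) : fend hf (f^[k] v) = fend hf v := by
  induction k with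
  | zero => rfl
  | succ k ih => rw [Function.iterate_succ_apply', fend_fval hf, ih]

theorem fend_of_fixed (hf : Good f) {v : V} (h : f v = v) : fend hf v = v := by
  rw [fend, iterate_fixed_of_fixed h]

theorem fend_fend (hf : Good f) (v : V) : fend hf (fend hf v) = fend hf v :=
  fend_of_fixed hf (fend_fixed hf v)

theorem fend_eq_self_iff (hf : Good f) {v : V} : fend hf v = v ↔ f v = v := by
  constructor
  · intro h
    have := fend_fixed hf v
    rwa [h] at this
  · exact fend_of_fixed hf

/-- A periodic point of a good function is fixed. -/
theorem fixed_of_periodic (hf : Good f) {v : V} {m : ℕ} (hm : 0 < m)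
    (h : f^[m] v = v) : f v = v := by
  by_contra hne
  -- hgt along iterates strictly decreases while non-fixed
  have key : ∀ j ≤ m, hgt hf (f^[j] v) + j ≤ hgt hf v := by
    intro j hj
    induction j with
    | zero => simp
    | succ j ih =>
      have hj' : j ≤ m := Nat.le_of_succ_le hj
      have hlt : f (f^[j] v) ≠ f^[j] v := by
        intro hfix
        -- then f^[m] v = f^[j] v, so v = f^[j] v is fixed... derive f v = v
        have hits : ∀ i, j ≤ i → f^[i] v = f^[j] v := by
          intro i hi
          obtain ⟨d, rfl⟩ := Nat.exists_eq_add_of_le hi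
          rw [Nat.add_comm, Function.iterate_add_apply]
          exact iterate_fixed_of_fixed hfix d
        have hv : v = f^[j] v := by conv_lhs => rw [← h, hits m hj']
        exact hne (by rw [hv]; exact hfix)
      have h2 := hgt_fval hf hlt
      rw [show f (f^[j] v) = f^[j+1] v from (Function.iterate_succ_apply' f j v).symm] at h2
      have := ih hj'
      omega
  have := key m le_rfl
  rw [h] at this
  omega

end RFC

namespace RFC2
open RFC SimpleGraph

variable {V : Type*} {f : V → V}

def graphOf (f : V → V) : SimpleGraph V := SimpleGraph.fromRel (fun a b => f a = b)

theorem graphOf_adj {a b : V} : (graphOf f).Adj a b ↔ a ≠ b ∧ (f a = b ∨ f b = a) := by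
  simp [graphOf, SimpleGraph.fromRel_adj]

theorem adj_of_ne {a : V} (h : f a ≠ a) : (graphOf f).Adj a (f a) :=
  graphOf_adj.mpr ⟨fun hh => h hh.symm, Or.inl rfl⟩

theorem reachable_fend (hf : Good f) (v : V) : (graphOf f).Reachable v (fend hf v) := by
  generalize hm : hgt hf v = m
  induction m using Nat.strong_induction_on generalizing v with
  | _ m ih =>
    by_cases h : f v = v
    · rw [fend_of_fixed hf h]
    · have h1 : (graphOf f).Reachable v (f v) := (adj_of_ne (fun hh => h hh)).reachable
      have h2 := ih (hgt hf (f v)) (by rw [← hm]; exact hgt_fval_lt hf h) (f v) rfl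
      rw [fend_fval hf] at h2
      exact h1.trans h2

theorem fend_eq_of_adj (hf : Good f) {a b : V} (h : (graphOf f).Adj a b) :
    fend hf a = fend hf b := by
  rcases graphOf_adj.mp h with ⟨hne, hab | hba⟩
  · rw [← hab, fend_fval]
  · rw [← hba, fend_fval]

theorem fend_eq_of_reachable (hf : Good f) {a b : V} (h : (graphOf f).Reachable a b) :
    fend hf a = fend hf b := by
  obtain ⟨p⟩ := h
  induction p with
  | nil => rfl
  | cons hadj _ ih => rw [fend_eq_of_adj hf hadj, ih]

/-- the key bridge lemma -/
theorem isBridge_graphOf (hf : Good f) {a : V} (h : f a ≠ a) :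
    (graphOf f).IsBridge s(a, f a) := by
  rw [isBridge_iff]
  rintro ⟨p⟩
  -- every vertex reachable from `a` in the deleted graph has `a` in its forward orbit
  set S : V → Prop := fun w => ∃ k, f^[k] w = a with hS
  have step : ∀ w u : V, S w → ((graphOf f) \ fromEdgeSet {s(a, f a)}).Adj w u → S u := by
    rintro w u ⟨k, hk⟩ hadj
    have hadj' : (graphOf f).Adj w u ∧ ¬(s(w, u) = s(a, f a) ∧ w ≠ u) := by
      simpa [fromEdgeSet_adj] using hadj
    have hne : w ≠ u := hadj'.1.ne
    have hedge : s(w, u) ≠ s(a, f a) := fun hh => hadj'.2 ⟨hh, hne⟩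
    rcases graphOf_adj.mp hadj'.1 with ⟨-, hwu | huw⟩
    · -- f w = u
      rcases Nat.eq_zero_or_pos k with rfl | hk0
      · -- w = a, u = f a : deleted edge
        simp only [Function.iterate_zero, id] at hk
        exact absurd (by subst hk; rw [hwu]) hedge
      · refine ⟨k - 1, ?_⟩
        rw [← hwu, ← Function.iterate_succ_apply, Nat.succ_eq_add_one,
          Nat.sub_add_cancel hk0, hk]
    · exact ⟨k + 1, by rw [Function.iterate_succ_apply, huw, hk]⟩
  have all : ∀ (w u : V) (_ : ((graphOf f) \ fromEdgeSet {s(a, f a)}).Walk w u), S w → S u := by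
    intro w u q
    induction q with
    | nil => exact id
    | cons hadj q ih => exact fun hw => ih (step _ _ hw hadj)
  obtain ⟨k, hk⟩ := all a (f a) p ⟨0, rfl⟩
  have : f^[k + 1] a = a := by rw [Function.iterate_succ_apply, hk]
  exact h (fixed_of_periodic hf (Nat.succ_pos k) this)

theorem isAcyclic_graphOf (hf : Good f) : (graphOf f).IsAcyclic := by
  rw [isAcyclic_iff_forall_adj_isBridge]
  intro v w hadj
  rcases graphOf_adj.mp hadj with ⟨hne, hvw | hwv⟩
  · rw [← hvw]
    exact isBridge_graphOf hf (by rw [hvw]; exact fun hh => hne hh.symm)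
  · rw [Sym2.eq_swap, ← hwv]
    exact isBridge_graphOf hf (by rw [hwv]; exact hne)

/-- connected components of `graphOf f` are in bijection with fixed points of `f`. -/
noncomputable def componentEquivFixed (hf : Good f) :
    (graphOf f).ConnectedComponent ≃ {p : V // f p = p} where
  toFun := ConnectedComponent.lift (fun v => ⟨fend hf v, fend_fixed hf v⟩)
    (fun v w p _ => Subtype.ext (fend_eq_of_reachable hf ⟨p⟩))
  invFun := fun p => (graphOf f).connectedComponentMk p.1
  left_inv := by
    apply ConnectedComponent.ind
    intro v
    exact (ConnectedComponent.sound (reachable_fend hf v)).symm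
  right_inv := by
    rintro ⟨p, hp⟩
    simp only [ConnectedComponent.lift_mk]
    exact Subtype.ext (fend_of_fixed hf hp)

end RFC2

namespace RFC3
open RFC RFC2 SimpleGraph

variable {V : Type*} [DecidableEq V]
variable (G : SimpleGraph V) (root : G.ConnectedComponent → V)

/-- target root of a vertex -/
def rho (v : V) : V := root (G.connectedComponentMk v)

variable (hroot : ∀ c, G.connectedComponentMk (root c) = c)

include hroot in
theorem reachable_rho (v : V) : G.Reachable v (rho G root v) :=
  (ConnectedComponent.exact (hroot (G.connectedComponentMk v))).symm

/-- a chosen path from `v` to its root -/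
noncomputable def pth (v : V) : G.Path v (rho G root v) :=
  ((reachable_rho G root hroot v).some).toPath

/-- the parent of `v` : next vertex on the chosen path to the root -/
noncomputable def par (v : V) : V := (pth G root hroot v).1.getVert 1

theorem length_pth_eq_zero {v : V} (h : rho G root v = v) :
    (pth G root hroot v).1.length = 0 := by
  have hp : ((pth G root hroot v).1.copy rfl h).IsPath :=
    (Walk.isPath_copy _ rfl h).mpr (pth G root hroot v).2
  have := Walk.isPath_iff_eq_nil.mp hp
  have hl := congrArg Walk.length this
  rwa [Walk.length_copy, Walk.length_nil] at hl

theorem par_of_rho_eq {v : V} (h : rho G root v = v) : par G root hroot v = v := by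
  rw [par, Walk.getVert_of_length_le _ (by rw [length_pth_eq_zero G root hroot h]; omega), h]

theorem pth_not_nil {v : V} (h : rho G root v ≠ v) : ¬ (pth G root hroot v).1.Nil := by
  rw [Walk.nil_iff_length_eq]
  intro h0
  exact h (Walk.eq_of_length_eq_zero h0).symm

theorem adj_par {v : V} (h : rho G root v ≠ v) : G.Adj v (par G root hroot v) :=
  Walk.adj_snd (pth_not_nil G root hroot h)

theorem par_eq_self_iff {v : V} : par G root hroot v = v ↔ rho G root v = v := by
  constructor
  · intro h
    by_contra hne
    exact (adj_par G root hroot hne).ne' h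
  · exact par_of_rho_eq G root hroot

theorem rho_par {v : V} (h : rho G root v ≠ v) :
    rho G root (par G root hroot v) = rho G root v := by
  rw [rho, rho, ConnectedComponent.connectedComponentMk_eq_of_adj (adj_par G root hroot h).symm]

variable (hG : G.IsAcyclic)

include hG in
theorem pth_eq {v : V} (p : G.Walk v (rho G root v)) (hp : p.IsPath) :
    (pth G root hroot v).1 = p := by
  have := (isAcyclic_iff_path_unique.mp hG) (pth G root hroot v) ⟨p, hp⟩
  rw [this]

include hG in
theorem par_eq_getVert {v : V} (p : G.Walk v (rho G root v)) (hp : p.IsPath) :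
    par G root hroot v = p.getVert 1 := by
  rw [par, pth_eq G root hroot hG p hp]

include hG in
theorem length_par {v : V} (h : rho G root v ≠ v) :
    (pth G root hroot (par G root hroot v)).1.length + 1
      = (pth G root hroot v).1.length := by
  set p := (pth G root hroot v).1 with hpdef
  have hnil : ¬ p.Nil := pth_not_nil G root hroot h
  have htail : (p.tail.copy rfl (rho_par G root hroot h).symm).IsPath := by
    rw [Walk.isPath_copy]
    exact (pth G root hroot v).2.tail
  have h2 := pth_eq G root hroot hG _ htail
  have h3 := congrArg Walk.length h2
  exact (congrArg (· + 1) (h3.trans (Walk.length_copy _ _ _))).trans (Walk.length_tail_add_one hnil)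

include hG in
/-- the parent function is Good -/
theorem good_par : Good (par G root hroot) := by
  intro v
  generalize hm : (pth G root hroot v).1.length = m
  induction m using Nat.strong_induction_on generalizing v with
  | _ m ih =>
    by_cases h : rho G root v = v
    · exact ⟨0, by simpa using par_of_rho_eq G root hroot h⟩
    · obtain ⟨k, hk⟩ := ih (pth G root hroot (par G root hroot v)).1.length
        (by rw [← hm, ← length_par G root hroot hG h]; omega) _ rfl
      exact ⟨k + 1, by rwa [Function.iterate_succ_apply]⟩

/-- fixed points of the parent function are exactly roots, giving a bijection
with connected components. -/
noncomputable def fixedEquivComponents :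
    {p : V // par G root hroot p = p} ≃ G.ConnectedComponent where
  toFun := fun p => G.connectedComponentMk p.1
  invFun := fun c => ⟨root c, by
    rw [par_eq_self_iff]
    unfold rho
    rw [hroot]⟩
  left_inv := by
    rintro ⟨p, hp⟩
    rw [par_eq_self_iff] at hp
    exact Subtype.ext hp
  right_inv := fun c => hroot c

include hG in
/-- every edge of `G` is a parent edge -/
theorem adj_iff_par {a b : V} (hab : G.Adj a b) :
    par G root hroot a = b ∨ par G root hroot b = a := by
  have hcc : G.connectedComponentMk a = G.connectedComponentMk b :=
    ConnectedComponent.connectedComponentMk_eq_of_adj hab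
  have hrr : rho G root b = rho G root a := by rw [rho, rho, hcc]
  by_cases hmem : a ∈ (pth G root hroot b).1.support
  · -- then the path from b starts with the edge b-a
    right
    set q := (pth G root hroot b).1 with hq
    have htake : (q.takeUntil a hmem).IsPath := (pth G root hroot b).2.takeUntil hmem
    have hsingle : (Walk.cons hab.symm Walk.nil : G.Walk b a).IsPath := by
      simp [Walk.cons_isPath_iff, hab.ne']
    have hEq : q.takeUntil a hmem = Walk.cons hab.symm Walk.nil := by
      have := (isAcyclic_iff_path_unique.mp hG) ⟨q.takeUntil a hmem, htake⟩
        ⟨Walk.cons hab.symm Walk.nil, hsingle⟩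
      exact congrArg Subtype.val this
    have hspec := q.take_spec hmem
    rw [hEq] at hspec
    rw [par, ← hq, ← hspec]
    simp [Walk.getVert_cons_succ]
  · -- the path from a is the edge a-b followed by the path from b
    left
    have hp : (Walk.cons hab ((pth G root hroot b).1.copy rfl hrr)).IsPath := by
      rw [Walk.cons_isPath_iff]
      constructor
      · rw [Walk.isPath_copy]
        exact (pth G root hroot b).2
      · rwa [Walk.support_copy]
    rw [par_eq_getVert G root hroot hG _ hp]
    simp [Walk.getVert_cons_succ]

end RFC3

namespace RFC4
open RFC RFC2 RFC3 SimpleGraph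

variable {V : Type*} [DecidableEq V] {f : V → V}

noncomputable def rootOf (hf : Good f) : (graphOf f).ConnectedComponent → V :=
  fun c => (componentEquivFixed hf c).1

theorem hrootOf (hf : Good f) :
    ∀ c, (graphOf f).connectedComponentMk (rootOf hf c) = c :=
  fun c => (componentEquivFixed hf).left_inv c

theorem rho_rootOf (hf : Good f) (v : V) :
    rho (graphOf f) (rootOf hf) v = fend hf v := by
  rfl

theorem par_graphOf (hf : Good f) :
    par (graphOf f) (rootOf hf) (hrootOf hf) = f := by
  have hG := isAcyclic_graphOf hf
  funext v
  suffices H : ∀ (m : ℕ) (v : V), hgt hf v = m →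
      par (graphOf f) (rootOf hf) (hrootOf hf) v = f v ∧
      ∀ w ∈ (pth (graphOf f) (rootOf hf) (hrootOf hf) v).1.support, ∃ k, f^[k] v = w by
    exact (H _ v rfl).1
  intro m
  induction m using Nat.strong_induction_on with
  | _ m ih =>
    intro v hm
    by_cases h : f v = v
    · have hrho : rho (graphOf f) (rootOf hf) v = v := by
        rw [rho_rootOf, fend_of_fixed hf h]
      constructor
      · rw [par_of_rho_eq _ _ _ hrho, h]
      · intro w hw
        rw [Walk.mem_support_iff_exists_getVert] at hw
        obtain ⟨k, hk, hkle⟩ := hw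
        rw [length_pth_eq_zero _ _ _ hrho, Nat.le_zero] at hkle
        subst hkle
        rw [Walk.getVert_zero] at hk
        exact ⟨0, hk⟩
    · have hrho : rho (graphOf f) (rootOf hf) v ≠ v := by
        rw [rho_rootOf]
        exact fun hh => h ((fend_eq_self_iff hf).mp hh)
      obtain ⟨ihpar, ihsupp⟩ := ih (hgt hf (f v)) (by rw [← hm]; exact hgt_fval_lt hf h) (f v) rfl
      have hrr : rho (graphOf f) (rootOf hf) (f v) = rho (graphOf f) (rootOf hf) v := by
        rw [rho_rootOf, rho_rootOf, fend_fval]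
      set q := (pth (graphOf f) (rootOf hf) (hrootOf hf) (f v)).1 with hq
      have hvq : v ∉ q.support := by
        intro hmem
        obtain ⟨k, hk⟩ := ihsupp v hmem
        have : f^[k + 1] v = v := by rw [Function.iterate_succ_apply, hk]
        exact h (fixed_of_periodic hf (Nat.succ_pos k) this)
      have hW : (Walk.cons (adj_of_ne h) (q.copy rfl hrr)).IsPath := by
        rw [Walk.cons_isPath_iff]
        refine ⟨(Walk.isPath_copy _ rfl hrr).mpr (pth _ _ _ (f v)).2, ?_⟩
        rwa [Walk.support_copy]
      have hpeq := pth_eq (graphOf f) (rootOf hf) (hrootOf hf) hG _ hW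
      constructor
      · rw [par, hpeq, Walk.getVert_cons_succ, Walk.getVert_zero]
      · intro w hw
        rw [hpeq, Walk.support_cons, Walk.support_copy] at hw
        rcases List.mem_cons.mp hw with rfl | hw
        · exact ⟨0, rfl⟩
        · obtain ⟨k, hk⟩ := ihsupp w hw
          exact ⟨k + 1, by rwa [Function.iterate_succ_apply]⟩

end RFC4

namespace RFC5
open RFC Function

variable {V : Type*} [DecidableEq V] [Fintype V]

/-- good functions with exactly `r` fixed points -/
abbrev GoodR (V : Type*) (r : ℕ) := {f : V → V // Good f ∧ Nat.card {p : V // f p = p} = r}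

theorem orbit_ne_of_fend_ne {f : V → V} (hf : Good f) {ρ v : V} (hρ : f ρ = ρ)
    (h : fend hf v ≠ ρ) : ∀ k, f^[k] v ≠ ρ := by
  intro k hk
  apply h
  rw [← fend_iterate hf v k, hk, fend_of_fixed hf hρ]

theorem fend_ne_iff {f : V → V} (hf : Good f) {ρ v : V} (hρ : f ρ = ρ) :
    fend hf v ≠ ρ ↔ ∀ k, f^[k] v ≠ ρ :=
  ⟨orbit_ne_of_fend_ne hf hρ, fun h => h _⟩

theorem update_iterate_eq {f : V → V} {ρ v u : V} (hu : ∀ k, f^[k] u ≠ ρ) (k : ℕ) :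
    (update f ρ v)^[k] u = f^[k] u := by
  induction k with
  | zero => rfl
  | succ k ih =>
    rw [Function.iterate_succ_apply', Function.iterate_succ_apply', ih,
      update_of_ne (hu k)]

/-- if the orbit of `u` avoids `ρ`, then `u` is eventually fixed for the update -/
theorem update_evfix {f : V → V} (hf : Good f) {ρ v u : V} (hu : ∀ k, f^[k] u ≠ ρ) :
    ∃ m, (update f ρ v) ((update f ρ v)^[m] u) = (update f ρ v)^[m] u := by
  refine ⟨hgt hf u, ?_⟩
  rw [update_iterate_eq hu]
  have : f^[hgt hf u] u = fend hf u := rfl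
  rw [this, update_of_ne (by rw [← this]; exact hu _), fend_fixed hf u]

theorem good_update {f : V → V} (hf : Good f) {ρ v : V} (hρ : f ρ = ρ)
    (horb : ∀ k, f^[k] v ≠ ρ) : Good (update f ρ v) := by
  intro w
  by_cases hw : ∀ k, f^[k] w ≠ ρ
  · exact update_evfix hf hw
  · push_neg at hw
    obtain ⟨k0, hk0⟩ := hw
    have h1 : ∀ j, j < hgt hf w → f^[j] w ≠ ρ := by
      intro j hj hjρ
      have : hgt hf w ≤ j := hgt_le hf (by rw [hjρ, hρ])
      omega
    have h2 : ∀ j, j ≤ hgt hf w → (update f ρ v)^[j] w = f^[j] w := by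
      intro j hj
      induction j with
      | zero => rfl
      | succ j ih =>
        rw [Function.iterate_succ_apply', Function.iterate_succ_apply',
          ih (by omega), update_of_ne (h1 j (by omega))]
    have h3 : f^[hgt hf w] w = ρ := by
      have : fend hf w = ρ := by
        rw [← fend_iterate hf w k0, hk0, fend_of_fixed hf hρ]
      rw [← this]; rfl
    have h4 : (update f ρ v)^[hgt hf w + 1] w = v := by
      rw [Function.iterate_succ_apply', h2 _ le_rfl, h3, update_self]
    obtain ⟨m, hm⟩ := update_evfix hf (v := v) horb
    refine ⟨m + (hgt hf w + 1), ?_⟩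
    rw [Function.iterate_add_apply, h4, hm]

theorem fixed_update_iff {f : V → V} {ρ v : V} (hρ : f ρ = ρ) (hv : v ≠ ρ) (w : V) :
    update f ρ v w = w ↔ (f w = w ∧ w ≠ ρ) := by
  by_cases hw : w = ρ
  · subst hw
    simp only [update_self]
    constructor
    · intro h; exact absurd h hv
    · rintro ⟨-, h⟩; exact absurd rfl h
  · rw [update_of_ne hw]
    exact ⟨fun h => ⟨h, hw⟩, fun h => h.1⟩

theorem good_update_self {g : V → V} (hg : Good g) (u : V) : Good (update g u u) := by
  intro w
  generalize hm : hgt hg w = m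
  induction m using Nat.strong_induction_on generalizing w with
  | _ m ih =>
    by_cases hwu : w = u
    · exact ⟨0, by subst hwu; simp⟩
    · by_cases hfix : g w = w
      · exact ⟨0, by simpa [update_of_ne hwu] using hfix⟩
      · have hstep : update g u u w = g w := update_of_ne hwu _ _
        obtain ⟨k, hk⟩ := ih (hgt hg (g w)) (by rw [← hm]; exact hgt_fval_lt hg hfix) (g w) rfl
        exact ⟨k + 1, by rwa [Function.iterate_succ_apply, hstep]⟩

theorem fixed_update_self_iff {g : V → V} (u w : V) :
    update g u u w = w ↔ (g w = w ∨ w = u) := by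
  by_cases hw : w = u
  · subst hw; simp
  · rw [update_of_ne hw]
    constructor
    · exact Or.inl
    · rintro (h | h)
      · exact h
      · exact absurd h hw

theorem update_self_orbit_ne {g : V → V} (hg : Good g) {u : V} (hu : g u ≠ u) :
    ∀ k, (update g u u)^[k] (g u) ≠ u := by
  have key : ∀ k, (update g u u)^[k] (g u) = g^[k] (g u) ∧ g^[k] (g u) ≠ u := by
    intro k
    induction k with
    | zero => exact ⟨rfl, hu⟩
    | succ k ih =>
      constructor
      · rw [Function.iterate_succ_apply', Function.iterate_succ_apply', ih.1,
          update_of_ne ih.2]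
      · intro hbad
        have hper : g^[k + 2] u = u := by
          rw [show k + 2 = (k+1) + 1 from rfl, Function.iterate_succ_apply]
          exact hbad
        exact hu (fixed_of_periodic hg (by omega) hper)
  exact fun k h => (key k).2 (by rw [← (key k).1]; exact h)

/-! ### cardinality helpers -/

theorem nat_card_subtype_and_ne (P : V → Prop) (a : V) (ha : P a) :
    Nat.card {x : V // P x ∧ x ≠ a} = Nat.card {x : V // P x} - 1 := by
  classical
  have e : {x : V // P x ∧ x ≠ a} ≃ {y : {x : V // P x} // y ≠ ⟨a, ha⟩} :=
    { toFun := fun x => ⟨⟨x.1, x.2.1⟩, fun h => x.2.2 (congrArg Subtype.val h)⟩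
      invFun := fun y => ⟨y.1.1, y.1.2, fun h => y.2 (Subtype.ext h)⟩
      left_inv := fun x => rfl
      right_inv := fun y => rfl }
  rw [Nat.card_congr e, Nat.card_eq_fintype_card, Nat.card_eq_fintype_card]
  have : Fintype.card {y : {x : V // P x} // ¬ y = ⟨a, ha⟩}
      = Fintype.card {x : V // P x} - Fintype.card {y : {x : V // P x} // y = ⟨a, ha⟩} :=
    Fintype.card_subtype_compl _
  rw [this, Fintype.card_subtype_eq]

theorem nat_card_subtype_or_eq (P : V → Prop) (a : V) (ha : ¬ P a) :
    Nat.card {x : V // P x ∨ x = a} = Nat.card {x : V // P x} + 1 := by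
  classical
  have e : {x : V // P x ∨ x = a} ≃ Sum {x : V // P x} PUnit.{1} :=
    { toFun := fun x => if hp : P x.1 then Sum.inl ⟨x.1, hp⟩ else Sum.inr ⟨⟩
      invFun := fun y => Sum.rec (fun z => ⟨z.1, Or.inl z.2⟩) (fun _ => ⟨a, Or.inr rfl⟩) y
      left_inv := by
        rintro ⟨x, hx⟩
        by_cases hp : P x
        · simp [hp]
        · have hxa : x = a := hx.resolve_left hp
          simp only [hp, dif_neg, not_false_iff]
          exact Subtype.ext hxa.symm
      right_inv := by
        rintro (⟨x, hp⟩ | ⟨⟩)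
        · simp [hp]
        · simp [ha] }
  rw [Nat.card_congr e, Nat.card_sum]
  simp

end RFC5

namespace RFC6
open RFC RFC5 Function

variable {V : Type*} [DecidableEq V] [Fintype V]

/-- good functions with r+1 fixed points, a marked fixed point ρ, and a vertex
whose orbit avoids ρ -/
def T1 (V : Type*) (r : ℕ) := {x : (V → V) × V × V // Good x.1 ∧
  Nat.card {p : V // x.1 p = p} = r + 1 ∧ x.1 x.2.1 = x.2.1 ∧ ∀ k, x.1^[k] x.2.2 ≠ x.2.1}

/-- good functions with r fixed points and a marked non-fixed point -/
def T2 (V : Type*) (r : ℕ) := {y : (V → V) × V // Good y.1 ∧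
  Nat.card {p : V // y.1 p = p} = r ∧ y.1 y.2 ≠ y.2}

theorem update_update_self {f : V → V} {ρ : V} (hρ : f ρ = ρ) (v : V) :
    update (update f ρ v) ρ ρ = f := by
  funext x
  by_cases hx : x = ρ
  · subst hx; rw [update_self, hρ]
  · rw [update_of_ne hx, update_of_ne hx]

def cutAttach (r : ℕ) : T1 V r ≃ T2 V r where
  toFun := fun ⟨⟨f, ρ, v⟩, hf, hcard, hρ, horb⟩ =>
    ⟨(update f ρ v, ρ), good_update hf hρ horb, by
      show Nat.card {p : V // update f ρ v p = p} = r
      rw [Nat.card_congr (Equiv.subtypeEquivRight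
          (fixed_update_iff (f := f) (ρ := ρ) (v := v) hρ (horb 0))),
        nat_card_subtype_and_ne (fun x => f x = x) ρ hρ, hcard]
      omega, by
      show update f ρ v ρ ≠ ρ
      rw [update_self]
      exact horb 0⟩
  invFun := fun ⟨⟨g, u⟩, hg, hcard, hu⟩ =>
    ⟨(update g u u, u, g u), good_update_self hg u, by
      show Nat.card {p : V // update g u u p = p} = r + 1
      rw [Nat.card_congr (Equiv.subtypeEquivRight (fixed_update_self_iff (g := g) u)),
        nat_card_subtype_or_eq (fun x => g x = x) u hu, hcard],
      update_self _ _ _, update_self_orbit_ne hg hu⟩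
  left_inv := by
    rintro ⟨⟨f, ρ, v⟩, hf, hcard, hρ, horb⟩
    apply Subtype.ext
    simp only [update_self]
    exact Prod.ext (update_update_self hρ v) rfl
  right_inv := by
    rintro ⟨⟨g, u⟩, hg, hcard, hu⟩
    apply Subtype.ext
    simp only [update_self]
    refine Prod.ext ?_ rfl
    rw [update_idem, update_eq_self]

/-! ### cardinalities of T1 and T2 -/

theorem card_T2 (r : ℕ) :
    Nat.card (T2 V r) = Nat.card (GoodR V r) * (Fintype.card V - r) := by
  classical
  have e : T2 V r ≃ Σ F : GoodR V r, {u : V // F.1 u ≠ u} :=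
    { toFun := fun y => ⟨⟨y.1.1, y.2.1, y.2.2.1⟩, ⟨y.1.2, y.2.2.2⟩⟩
      invFun := fun z => ⟨(z.1.1, z.2.1), z.1.2.1, z.1.2.2, z.2.2⟩
      left_inv := fun y => rfl
      right_inv := fun z => rfl }
  rw [Nat.card_congr e, Nat.card_eq_fintype_card, Fintype.card_sigma]
  have hfib : ∀ F : GoodR V r, Fintype.card {u : V // F.1 u ≠ u}
      = Fintype.card V - r := by
    rintro ⟨f, hf, hcard⟩
    have : Fintype.card {u : V // ¬ f u = u} =
        Fintype.card V - Fintype.card {u : V // f u = u} :=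
      Fintype.card_subtype_compl _
    rw [Nat.card_eq_fintype_card] at hcard
    simpa [hcard] using this
  rw [Finset.sum_congr rfl (fun F _ => hfib F), Finset.sum_const, smul_eq_mul,
    Finset.card_univ, Nat.card_eq_fintype_card]

/-- for a good function, fixed points and arbitrary targets: the total count of
pairs (fixed point, vertex whose orbit avoids it) -/
theorem card_pairs {f : V → V} (hf : Good f) {s : ℕ}
    (hcard : Nat.card {p : V // f p = p} = s) :
    Nat.card {q : V × V // f q.1 = q.1 ∧ ∀ k, f^[k] q.2 ≠ q.1}
      = s * Fintype.card V - Fintype.card V := by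
  classical
  have e : {q : V × V // f q.1 = q.1 ∧ ∀ k, f^[k] q.2 ≠ q.1}
      ≃ Σ ρ : {p : V // f p = p}, {v : V // fend hf v ≠ ρ.1} :=
    { toFun := fun q => ⟨⟨q.1.1, q.2.1⟩, ⟨q.1.2, (fend_ne_iff hf q.2.1).mpr q.2.2⟩⟩
      invFun := fun z => ⟨(z.1.1, z.2.1), z.1.2, (fend_ne_iff hf z.1.2).mp z.2.2⟩
      left_inv := fun q => rfl
      right_inv := fun z => rfl }
  have etot : (Σ ρ : {p : V // f p = p}, {v : V // fend hf v = ρ.1}) ≃ V :=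
    { toFun := fun z => z.2.1
      invFun := fun v => ⟨⟨fend hf v, fend_fixed hf v⟩, ⟨v, rfl⟩⟩
      left_inv := by
        rintro ⟨⟨ρ, hρ⟩, ⟨v, hv⟩⟩
        have : fend hf v = ρ := hv
        subst this
        rfl
      right_inv := fun v => rfl }
  have htot : ∑ ρ : {p : V // f p = p}, Fintype.card {v : V // fend hf v = ρ.1}
      = Fintype.card V := by
    rw [← Fintype.card_sigma, Fintype.card_congr etot]
  have hsplit : ∀ ρ : {p : V // f p = p},
      Fintype.card {v : V // fend hf v ≠ ρ.1}
        = Fintype.card V - Fintype.card {v : V // fend hf v = ρ.1} :=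
    fun ρ => Fintype.card_subtype_compl _
  have hle : ∀ ρ : {p : V // f p = p},
      Fintype.card {v : V // fend hf v = ρ.1} ≤ Fintype.card V :=
    fun ρ => Fintype.card_subtype_le _
  rw [Nat.card_congr e, Nat.card_eq_fintype_card, Fintype.card_sigma]
  have hsum : ∑ ρ : {p : V // f p = p}, Fintype.card {v : V // fend hf v ≠ ρ.1}
      + ∑ ρ : {p : V // f p = p}, Fintype.card {v : V // fend hf v = ρ.1}
      = ∑ _ρ : {p : V // f p = p}, Fintype.card V := by
    rw [← Finset.sum_add_distrib]
    refine Finset.sum_congr rfl fun ρ _ => ?_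
    rw [hsplit ρ, Nat.sub_add_cancel (hle ρ)]
  rw [htot] at hsum
  have hcount : ∑ _ρ : {p : V // f p = p}, Fintype.card V = s * Fintype.card V := by
    rw [Finset.sum_const, smul_eq_mul, Finset.card_univ, ← Nat.card_eq_fintype_card, hcard]
  omega

theorem card_T1 (r : ℕ) :
    Nat.card (T1 V r) = Nat.card (GoodR V (r + 1)) * (r * Fintype.card V) := by
  classical
  have e : T1 V r ≃ Σ F : GoodR V (r + 1),
      {q : V × V // F.1 q.1 = q.1 ∧ ∀ k, F.1^[k] q.2 ≠ q.1} :=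
    { toFun := fun x => ⟨⟨x.1.1, x.2.1, x.2.2.1⟩, ⟨x.1.2, x.2.2.2⟩⟩
      invFun := fun z => ⟨(z.1.1, z.2.1), z.1.2.1, z.1.2.2, z.2.2⟩
      left_inv := fun x => rfl
      right_inv := fun z => rfl }
  rw [Nat.card_congr e, Nat.card_eq_fintype_card, Fintype.card_sigma]
  have hfib : ∀ F : GoodR V (r + 1),
      Fintype.card {q : V × V // F.1 q.1 = q.1 ∧ ∀ k, F.1^[k] q.2 ≠ q.1}
        = r * Fintype.card V := by
    rintro ⟨f, hf, hcard⟩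
    have := card_pairs hf hcard
    rw [Nat.card_eq_fintype_card] at this
    rw [this, Nat.add_mul, Nat.one_mul, Nat.add_sub_cancel]
  rw [Finset.sum_congr rfl (fun F _ => hfib F), Finset.sum_const, smul_eq_mul,
    Finset.card_univ, Nat.card_eq_fintype_card]

/-- the key recurrence -/
theorem recurrence (r : ℕ) :
    Nat.card (GoodR V (r + 1)) * (r * Fintype.card V)
      = Nat.card (GoodR V r) * (Fintype.card V - r) := by
  rw [← card_T1, ← card_T2, Nat.card_congr (cutAttach r)]

/-- base case : the only good function with `|V|` fixed points is the identity -/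
theorem card_goodR_top : Nat.card (GoodR V (Fintype.card V)) = 1 := by
  classical
  have e : GoodR V (Fintype.card V) ≃ PUnit.{1} :=
    { toFun := fun _ => ⟨⟩
      invFun := fun _ => ⟨id, fun v => ⟨0, rfl⟩, by
        have e2 : {p : V // (id : V → V) p = p} ≃ V := Equiv.subtypeUnivEquiv (fun p => rfl)
        rw [Nat.card_congr e2, Nat.card_eq_fintype_card]⟩
      left_inv := by
        rintro ⟨f, hf, hcard⟩
        apply Subtype.ext
        funext x
        by_contra hx
        have : Fintype.card {p : V // f p = p} < Fintype.card V :=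
          Fintype.card_subtype_lt (x := x) (fun h => hx h.symm)
        rw [← Nat.card_eq_fintype_card, hcard] at this
        omega
      right_inv := fun _ => rfl }
  rw [Nat.card_congr e]
  simp

end RFC6

namespace RFC7
open RFC RFC5 RFC6

theorem goodR_formula (n r : ℕ) (hn : 1 ≤ n) (hr : 1 ≤ r) (hrn : r ≤ n) :
    Nat.card (GoodR (Fin n) r) = (n - 1).choose (r - 1) * n ^ (n - r) := by
  suffices H : ∀ d r', 1 ≤ r' → r' + d = n →
      Nat.card (GoodR (Fin n) r') = (n - 1).choose (r' - 1) * n ^ (n - r') by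
    exact H (n - r) r hr (by omega)
  intro d
  induction d with
  | zero =>
    intro r' hr' hrn'
    have hbase := card_goodR_top (V := Fin n)
    rw [Fintype.card_fin] at hbase
    have hrn'' : r' = n := by omega
    subst hrn''
    rw [hbase, Nat.sub_self, pow_zero, Nat.choose_self]
    omega
  | succ d ih =>
    intro r' hr' hrn'
    have hlt : r' < n := by omega
    have hA1 := ih (r' + 1) (by omega) (by omega)
    have hrec := recurrence (V := Fin n) r'
    rw [Fintype.card_fin] at hrec
    have hch : (n - 1).choose r' * r' = (n - 1).choose (r' - 1) * (n - r') := by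
      have h0 := Nat.choose_succ_right_eq (n - 1) (r' - 1)
      rw [Nat.sub_add_cancel hr'] at h0
      rw [show n - 1 - (r' - 1) = n - r' by omega] at h0
      exact h0
    have hpow : n ^ (n - (r' + 1)) * n = n ^ (n - r') := by
      rw [← pow_succ]
      congr 1
      omega
    have key : Nat.card (GoodR (Fin n) r') * (n - r')
        = ((n - 1).choose (r' - 1) * n ^ (n - r')) * (n - r') := by
      rw [← hrec, hA1]
      calc ((n - 1).choose (r' + 1 - 1) * n ^ (n - (r' + 1))) * (r' * n)
          = ((n - 1).choose r' * r') * (n ^ (n - (r' + 1)) * n) := by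
            rw [Nat.add_sub_cancel]; ring
        _ = ((n - 1).choose (r' - 1) * (n - r')) * n ^ (n - r') := by rw [hch, hpow]
        _ = ((n - 1).choose (r' - 1) * n ^ (n - r')) * (n - r') := by ring
    exact Nat.eq_of_mul_eq_mul_right (by omega) key

end RFC7

namespace RFC8
open RFC RFC2 RFC3 RFC4 RFC5 SimpleGraph

variable {V : Type*} [DecidableEq V]

theorem adj_iff_par' (G : SimpleGraph V) (root : G.ConnectedComponent → V)
    (hroot : ∀ c, G.connectedComponentMk (root c) = c) (hG : G.IsAcyclic) (a b : V) :
    G.Adj a b ↔ a ≠ b ∧ (par G root hroot a = b ∨ par G root hroot b = a) := by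
  constructor
  · intro h
    exact ⟨h.ne, adj_iff_par G root hroot hG h⟩
  · rintro ⟨hne, h | h⟩
    · have hrho : rho G root a ≠ a := by
        intro hr
        exact hne (by rw [← h, par_of_rho_eq G root hroot hr])
      have := adj_par G root hroot hrho
      rwa [h] at this
    · have hrho : rho G root b ≠ b := by
        intro hr
        exact hne.symm (by rw [← h, par_of_rho_eq G root hroot hr])
      have := adj_par G root hroot hrho
      rw [h] at this
      exact this.symm

/-- abbreviation for the forest type -/
abbrev Forest (V : Type*) (r : ℕ) := {F : (G : SimpleGraph V) × (G.ConnectedComponent → V) //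
  F.1.IsAcyclic ∧ Nat.card F.1.ConnectedComponent = r ∧
  ∀ c, F.1.connectedComponentMk (F.2 c) = c}

variable (r : ℕ)

noncomputable def toForest (x : GoodR V r) : Forest V r :=
  ⟨⟨graphOf x.1, rootOf x.2.1⟩, isAcyclic_graphOf x.2.1, by
    rw [Nat.card_congr (componentEquivFixed x.2.1), x.2.2], hrootOf x.2.1⟩

noncomputable def toGoodR (y : Forest V r) : GoodR V r :=
  ⟨par y.1.1 y.1.2 y.2.2.2, good_par y.1.1 y.1.2 y.2.2.2 y.2.1, by
    rw [Nat.card_congr (fixedEquivComponents y.1.1 y.1.2 y.2.2.2), y.2.2.1]⟩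

theorem toGoodR_toForest (x : GoodR V r) : toGoodR r (toForest r x) = x := by
  apply Subtype.ext
  show par (graphOf x.1) (rootOf x.2.1) (hrootOf x.2.1) = x.1
  exact par_graphOf x.2.1

theorem toGoodR_inj : Function.Injective (toGoodR (V := V) r) := by
  rintro ⟨⟨G, rootG⟩, hacG, hcG, hsG⟩ ⟨⟨H, rootH⟩, hacH, hcH, hsH⟩ hEq
  have hfun : par G rootG hsG = par H rootH hsH := congrArg Subtype.val hEq
  have hGH : G = H := by
    ext a b
    rw [adj_iff_par' G rootG hsG hacG, adj_iff_par' H rootH hsH hacH, hfun]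
  subst hGH
  have hroots : rootG = rootH := by
    funext c
    have hself : rho G rootG (rootG c) = rootG c := by
      unfold rho
      rw [hsG c]
    have h1 : par G rootG hsG (rootG c) = rootG c :=
      (par_eq_self_iff G rootG hsG).mpr hself
    rw [hfun] at h1
    have h2 : rho G rootH (rootG c) = rootG c :=
      (par_eq_self_iff G rootH hsH).mp h1
    unfold rho at h2
    rw [hsG c] at h2
    exact h2.symm
  subst hroots
  rfl

noncomputable def forestEquiv : GoodR V r ≃ Forest V r where
  toFun := toForest r
  invFun := toGoodR r
  left_inv := toGoodR_toForest r
  right_inv := fun y => toGoodR_inj r (toGoodR_toForest r (toGoodR r y))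

end RFC8

/-- The number of rooted spanning forests of the complete graph on `n` labeled
vertices with exactly `r` trees (each with a distinguished root) equals
`binomial(n-1, r-1) * n^(n-r)`. A rooted spanning forest is encoded as an
acyclic simple graph on `Fin n` (a spanning subgraph of the complete graph)
together with a choice of a root vertex in each connected component. -/
theorem rooted_forest_count (n r : ℕ) (hn : 1 ≤ n) (hr : 1 ≤ r) (hrn : r ≤ n) :
    Nat.card {F : (G : SimpleGraph (Fin n)) × (G.ConnectedComponent → Fin n) //
        F.1.IsAcyclic ∧ Nat.card F.1.ConnectedComponent = r ∧
        ∀ c, F.1.connectedComponentMk (F.2 c) = c} =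
      (n - 1).choose (r - 1) * n ^ (n - r) := by
  have h1 : Nat.card (RFC8.Forest (Fin n) r) = Nat.card (RFC5.GoodR (Fin n) r) :=
    Nat.card_congr (RFC8.forestEquiv (V := Fin n) r).symm
  have h2 := RFC7.goodR_formula n r hn hr hrn
  exact h1.trans h2
end

section
/- The number of unrooted labeled trees on n vertices is n^(n-2) (Cayley's formula). -/
namespace Cayley
variable {n : ℕ}

/-- `p` is a rooted-tree function with root `a`. -/
def IsRT (p : Fin n → Fin n) (a : Fin n) : Prop := p a = a ∧ ∀ x, ∃ k, p^[k] x = a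

noncomputable def hit (p : Fin n → Fin n) (a x : Fin n) : ℕ :=
  letI := Classical.dec (∃ k, p^[k] x = a)
  if h : ∃ k, p^[k] x = a then Nat.find h else 0

theorem hit_spec {p : Fin n → Fin n} {a x : Fin n} (h : ∃ k, p^[k] x = a) :
    p^[hit p a x] x = a := by
  classical
  unfold hit
  rw [dif_pos h]
  exact Nat.find_spec h

theorem hit_le {p : Fin n → Fin n} {a x : Fin n} {m : ℕ} (hm : p^[m] x = a) :
    hit p a x ≤ m := by
  classical
  unfold hit
  rw [dif_pos ⟨m, hm⟩]
  exact Nat.find_le hm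

theorem hit_self {p : Fin n → Fin n} {a : Fin n} : hit p a a = 0 :=
  Nat.le_zero.mp (hit_le (by simp))

theorem hit_eq_zero_iff {p : Fin n → Fin n} {a x : Fin n} (h : ∃ k, p^[k] x = a) :
    hit p a x = 0 ↔ x = a := by
  constructor
  · intro h0
    have := hit_spec h
    rwa [h0, Function.iterate_zero_apply] at this
  · rintro rfl; exact hit_self

theorem hit_apply {p : Fin n → Fin n} {a x : Fin n} (hp : IsRT p a) (hx : x ≠ a) :
    hit p a (p x) + 1 = hit p a x := by
  have hex := hp.2 x
  have h0 : hit p a x ≠ 0 := fun h => hx ((hit_eq_zero_iff hex).mp h)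
  have hs := hit_spec hex
  obtain ⟨m, hm⟩ : ∃ m, hit p a x = m + 1 := ⟨hit p a x - 1, (Nat.succ_pred_eq_of_pos (Nat.pos_of_ne_zero h0)).symm⟩
  have h1 : p^[m] (p x) = a := by
    rw [← Function.iterate_succ_apply]; rw [hm] at hs; exact hs
  have le1 : hit p a (p x) ≤ m := hit_le h1
  have le2 : hit p a x ≤ hit p a (p x) + 1 := by
    apply hit_le
    rw [Function.iterate_succ_apply]
    exact hit_spec ⟨m, h1⟩
  omega

theorem iter_inj {p : Fin n → Fin n} {a b : Fin n} (h : ∃ k, p^[k] b = a)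
    {i j : ℕ} (hi : i ≤ hit p a b) (hj : j ≤ hit p a b) (hij : p^[i] b = p^[j] b) :
    i = j := by
  by_contra hne
  wlog hlt : i < j generalizing i j
  · exact this hj hi hij.symm (Ne.symm hne) (by omega)
  have key : p^[(hit p a b - j) + i] b = a := by
    rw [Function.iterate_add_apply, hij, ← Function.iterate_add_apply]
    have : hit p a b - j + j = hit p a b := by omega
    rw [this]
    exact hit_spec h
  have := hit_le key
  omega

theorem ne_fixed {p : Fin n → Fin n} {a x : Fin n} (hp : IsRT p a) (hx : x ≠ a) :
    p x ≠ x := by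
  intro hfix
  obtain ⟨k, hk⟩ := hp.2 x
  rw [Function.iterate_fixed hfix] at hk
  exact hx hk


/-! ### Periodic points -/

def Per (f : Fin n → Fin n) (x : Fin n) : Prop := ∃ m, 0 < m ∧ f^[m] x = x

noncomputable def perSet (f : Fin n → Fin n) : Finset (Fin n) :=
  letI := Classical.decPred (Per f)
  Finset.univ.filter (Per f)

theorem mem_perSet {f : Fin n → Fin n} {x : Fin n} : x ∈ perSet f ↔ Per f x := by
  classical
  simp [perSet]

theorem per_iterate_mul {f : Fin n → Fin n} {x : Fin n} {m : ℕ} (h : f^[m] x = x) :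
    ∀ c, f^[m * c] x = x := by
  intro c
  induction c with
  | zero => simp
  | succ c ih =>
    have : m * (c + 1) = m * c + m := by ring
    rw [this, Function.iterate_add_apply, h, ih]

theorem per_apply {f : Fin n → Fin n} {x : Fin n} (h : Per f x) : Per f (f x) := by
  obtain ⟨m, hm, hx⟩ := h
  exact ⟨m, hm, by rw [← Function.iterate_succ_apply, Function.iterate_succ_apply', hx]⟩

theorem injOn_per {f : Fin n → Fin n} {x y : Fin n} (hx : Per f x) (hy : Per f y)
    (hxy : f x = f y) : x = y := by
  obtain ⟨mx, hmx, hfx⟩ := hx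
  obtain ⟨my, hmy, hfy⟩ := hy
  have e1 : f^[mx * my] x = x := per_iterate_mul hfx my
  have e2 : f^[mx * my] y = y := by rw [mul_comm]; exact per_iterate_mul hfy mx
  have hpos : 0 < mx * my := Nat.mul_pos hmx hmy
  obtain ⟨c, hc⟩ : ∃ c, mx * my = c + 1 := ⟨mx * my - 1, by omega⟩
  rw [hc] at e1 e2
  rw [← e1, ← e2, Function.iterate_succ_apply, Function.iterate_succ_apply, hxy]

/-- pigeonhole: some iterate equal -/
theorem exists_iterate_eq (f : Fin n → Fin n) (x : Fin n) (hn : 0 < n) :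
    ∃ i j, i < j ∧ f^[i] x = f^[j] x := by
  have : ¬ Function.Injective (fun i : Fin (n + 1) => f^[(i : ℕ)] x) := by
    intro hinj
    have := Fintype.card_le_of_injective _ hinj
    simp at this
  rw [Function.not_injective_iff] at this
  obtain ⟨i, j, hij, hne⟩ := this
  rcases lt_trichotomy (i : ℕ) (j : ℕ) with h | h | h
  · exact ⟨i, j, h, hij⟩
  · exact absurd (Fin.ext h) hne
  · exact ⟨j, i, h, hij.symm⟩

theorem exists_iterate_per (f : Fin n → Fin n) (x : Fin n) (hn : 0 < n) :
    ∃ t, Per f (f^[t] x) := by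
  obtain ⟨i, j, hlt, heq⟩ := exists_iterate_eq f x hn
  refine ⟨i, j - i, by omega, ?_⟩
  rw [← Function.iterate_add_apply]
  have : j - i + i = j := by omega
  rw [this, ← heq]

theorem iterate_mem_closed {f : Fin n → Fin n} {s : Finset (Fin n)}
    (hm : ∀ x ∈ s, f x ∈ s) {x : Fin n} (hx : x ∈ s) : ∀ i, f^[i] x ∈ s := by
  intro i
  induction i with
  | zero => simpa
  | succ i ih => rw [Function.iterate_succ_apply']; exact hm _ ih

theorem per_of_mem_closed (hn : 0 < n) {f : Fin n → Fin n} {s : Finset (Fin n)}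
    (hm : ∀ x ∈ s, f x ∈ s) (hinj : ∀ x ∈ s, ∀ y ∈ s, f x = f y → x = y)
    {x : Fin n} (hx : x ∈ s) : Per f x := by
  obtain ⟨i, j, hlt, heq⟩ := exists_iterate_eq f x hn
  have hiter := iterate_mem_closed hm hx
  -- cancel: f^[i] x = f^[j] x → f^[j-i] x = x
  have cancel : ∀ i, ∀ d, 0 < d → f^[i + d] x = f^[i] x → f^[d] x = x := by
    intro i
    induction i with
    | zero => intro d _ h; simpa using h
    | succ i ih =>
      intro d hd h
      apply ih d hd
      have h1 : i + 1 + d = (i + d) + 1 := by omega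
      rw [h1, Function.iterate_succ_apply', Function.iterate_succ_apply'] at h
      exact hinj _ (hiter _) _ (hiter _) h
  refine ⟨j - i, by omega, cancel i (j - i) (by omega) ?_⟩
  have : i + (j - i) = j := by omega
  rw [this, heq]

/-! ### The path finset and decode -/

noncomputable def pathSet (p : Fin n → Fin n) (a b : Fin n) : Finset (Fin n) :=
  (Finset.range (hit p a b + 1)).image (fun i => p^[i] b)

theorem mem_pathSet {p : Fin n → Fin n} {a b x : Fin n} :
    x ∈ pathSet p a b ↔ ∃ i, i ≤ hit p a b ∧ p^[i] b = x := by
  simp [pathSet, Finset.mem_image, Finset.mem_range, Nat.lt_succ_iff]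

theorem pathSet_card {p : Fin n → Fin n} {a b : Fin n} (hb : ∃ k, p^[k] b = a) :
    (pathSet p a b).card = hit p a b + 1 := by
  rw [pathSet, Finset.card_image_of_injOn, Finset.card_range]
  intro i hi j hj hij
  rw [Finset.coe_range, Set.mem_Iio] at hi hj
  exact iter_inj hb (by omega) (by omega) hij

noncomputable def decode (p : Fin n → Fin n) (a b : Fin n) : Fin n → Fin n := fun x =>
  if x ∈ (pathSet p a b).sort (· ≤ ·)
    then p^[((pathSet p a b).sort (· ≤ ·)).idxOf x] b
    else p x

theorem length_sort_pathSet {p : Fin n → Fin n} {a b : Fin n} (hb : ∃ k, p^[k] b = a) :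
    ((pathSet p a b).sort (· ≤ ·)).length = hit p a b + 1 := by
  rw [Finset.length_sort, pathSet_card hb]

theorem decode_get {p : Fin n → Fin n} {a b : Fin n} {i : ℕ}
    (hi : i < ((pathSet p a b).sort (· ≤ ·)).length) :
    decode p a b (((pathSet p a b).sort (· ≤ ·))[i]) = p^[i] b := by
  have hmem : ((pathSet p a b).sort (· ≤ ·))[i] ∈ (pathSet p a b).sort (· ≤ ·) :=
    List.getElem_mem hi
  rw [decode, if_pos hmem]
  congr 1
  exact List.Nodup.idxOf_getElem (Finset.sort_nodup _ _) i hi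

theorem decode_not_mem {p : Fin n → Fin n} {a b x : Fin n} (hx : x ∉ pathSet p a b) :
    decode p a b x = p x := by
  rw [decode, if_neg]
  rwa [Finset.mem_sort]

theorem decode_mem {p : Fin n → Fin n} {a b x : Fin n} (hx : x ∈ pathSet p a b) :
    decode p a b x = p^[((pathSet p a b).sort (· ≤ ·)).idxOf x] b := by
  rw [decode, if_pos]
  rwa [Finset.mem_sort]

theorem iterate_mem_pathSet {p : Fin n → Fin n} {a b : Fin n} {i : ℕ}
    (hi : i ≤ hit p a b) : p^[i] b ∈ pathSet p a b :=
  mem_pathSet.mpr ⟨i, hi, rfl⟩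

theorem decode_mapsTo {p : Fin n → Fin n} {a b : Fin n} (hb : ∃ k, p^[k] b = a)
    {x : Fin n} (hx : x ∈ pathSet p a b) : decode p a b x ∈ pathSet p a b := by
  rw [decode_mem hx]
  apply iterate_mem_pathSet
  have : ((pathSet p a b).sort (· ≤ ·)).idxOf x < ((pathSet p a b).sort (· ≤ ·)).length :=
    List.idxOf_lt_length_iff.mpr ((Finset.mem_sort _).mpr hx)
  rw [length_sort_pathSet hb] at this
  omega

theorem decode_injOn {p : Fin n → Fin n} {a b : Fin n} (hb : ∃ k, p^[k] b = a)
    {x y : Fin n} (hx : x ∈ pathSet p a b) (hy : y ∈ pathSet p a b)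
    (hxy : decode p a b x = decode p a b y) : x = y := by
  set L := (pathSet p a b).sort (· ≤ ·) with hL
  have hx' : L.idxOf x < L.length := List.idxOf_lt_length_iff.mpr ((Finset.mem_sort _).mpr hx)
  have hy' : L.idxOf y < L.length := List.idxOf_lt_length_iff.mpr ((Finset.mem_sort _).mpr hy)
  rw [decode_mem hx, decode_mem hy] at hxy
  have hlen : L.length = hit p a b + 1 := length_sort_pathSet hb
  have : L.idxOf x = L.idxOf y :=
    iter_inj hb (by omega) (by omega) hxy
  have h1 := List.idxOf_get (a := x) (l := L) hx'
  have h2 := List.idxOf_get (a := y) (l := L) hy'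
  rw [← h1, ← h2]
  exact congrArg L.get (Fin.ext this)

/-- Key: the periodic points of `decode p a b` are exactly the path from `b` to `a`. -/
theorem perSet_decode {p : Fin n → Fin n} {a b : Fin n} (hn : 0 < n) (hp : IsRT p a) :
    perSet (decode p a b) = pathSet p a b := by
  have hb : ∃ k, p^[k] b = a := hp.2 b
  apply Finset.Subset.antisymm
  · -- periodic ⊆ path
    intro x hx
    rw [mem_perSet] at hx
    by_contra hxp
    -- x eventually enters pathSet under decode
    have cl : ∀ i, ∀ y ∈ pathSet p a b, (decode p a b)^[i] y ∈ pathSet p a b := by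
      intro i y hy
      exact iterate_mem_closed (fun z hz => decode_mapsTo hb hz) hy i
    have enter : ∀ j (y : Fin n), p^[j] y = a → ∃ s, (decode p a b)^[s] y ∈ pathSet p a b := by
      intro j
      induction j with
      | zero =>
        intro y hy
        refine ⟨0, ?_⟩
        simp only [Function.iterate_zero_apply] at hy ⊢
        rw [hy]
        have h := iterate_mem_pathSet (p := p) (a := a) (b := b) (i := hit p a b) le_rfl
        rwa [hit_spec hb] at h
      | succ j ih =>
        intro y hy
        by_cases hmem : y ∈ pathSet p a b
        · exact ⟨0, by simpa⟩
        · rw [Function.iterate_succ_apply] at hy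
          obtain ⟨s, hs⟩ := ih (p y) hy
          refine ⟨s + 1, ?_⟩
          rw [Function.iterate_succ_apply, decode_not_mem hmem]
          exact hs
    obtain ⟨j, hj⟩ := hp.2 x
    obtain ⟨s, hs⟩ := enter j x hj
    obtain ⟨m, hm, hmx⟩ := hx
    have key : (decode p a b)^[m * (s + 1)] x = x := per_iterate_mul hmx (s + 1)
    have hdec : m * (s + 1) = (m * (s + 1) - s) + s := by
      have : s + 1 ≤ m * (s + 1) := by nlinarith
      omega
    rw [hdec, Function.iterate_add_apply] at key
    have := cl (m * (s + 1) - s) _ hs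
    rw [key] at this
    exact hxp this
  · -- path ⊆ periodic
    intro x hx
    rw [mem_perSet]
    exact per_of_mem_closed hn (fun z hz => decode_mapsTo hb hz)
      (fun z hz w hw => decode_injOn hb hz hw) hx


/-! ### Reading off the data from `decode` -/

theorem decode_getD {p : Fin n → Fin n} {a b d : Fin n} {i : ℕ}
    (hi : i < ((pathSet p a b).sort (· ≤ ·)).length) :
    decode p a b (((pathSet p a b).sort (· ≤ ·)).getD i d) = p^[i] b := by
  rw [List.getD_eq_getElem _ _ hi, decode_get hi]

theorem d2_b {p : Fin n → Fin n} {a b d : Fin n} (hb : ∃ k, p^[k] b = a) :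
    decode p a b (((pathSet p a b).sort (· ≤ ·)).getD 0 d) = b := by
  have hlen := length_sort_pathSet hb
  rw [decode_getD (by omega), Function.iterate_zero_apply]

theorem d2_a {p : Fin n → Fin n} {a b d : Fin n} (hb : ∃ k, p^[k] b = a) :
    decode p a b (((pathSet p a b).sort (· ≤ ·)).getD
      (((pathSet p a b).sort (· ≤ ·)).length - 1) d) = a := by
  have hlen := length_sort_pathSet hb
  have h1 : ((pathSet p a b).sort (· ≤ ·)).length - 1 = hit p a b := by omega
  rw [decode_getD (by omega), h1]
  exact hit_spec hb

theorem d2_p {p : Fin n → Fin n} {a b d : Fin n} (hp : IsRT p a) {i : ℕ}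
    (hi : i < ((pathSet p a b).sort (· ≤ ·)).length) :
    p (decode p a b (((pathSet p a b).sort (· ≤ ·)).getD i d)) =
      if i + 1 < ((pathSet p a b).sort (· ≤ ·)).length
        then decode p a b (((pathSet p a b).sort (· ≤ ·)).getD (i + 1) d)
        else decode p a b (((pathSet p a b).sort (· ≤ ·)).getD i d) := by
  have hb : ∃ k, p^[k] b = a := hp.2 b
  have hlen := length_sort_pathSet hb
  rw [decode_getD hi]
  split_ifs with h
  · rw [decode_getD h]
    exact (Function.iterate_succ_apply' p i b).symm
  · have h1 : i = hit p a b := by omega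
    rw [h1, hit_spec hb, hp.1]

theorem d2_surj {p : Fin n → Fin n} {a b : Fin n} (d : Fin n) (hb : ∃ k, p^[k] b = a) {x : Fin n}
    (hx : x ∈ pathSet p a b) :
    ∃ i, i < ((pathSet p a b).sort (· ≤ ·)).length ∧
      decode p a b (((pathSet p a b).sort (· ≤ ·)).getD i d) = x := by
  obtain ⟨i, hi, hix⟩ := mem_pathSet.mp hx
  have hlen := length_sort_pathSet hb
  exact ⟨i, by omega, by rw [decode_getD (by omega)]; exact hix⟩

/-- Injectivity of `decode`. -/
theorem decode_inj {p p' : Fin n → Fin n} {a b a' b' : Fin n} (hn : 0 < n)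
    (hp : IsRT p a) (hp' : IsRT p' a')
    (heq : decode p a b = decode p' a' b') : p = p' ∧ a = a' ∧ b = b' := by
  have hb : ∃ k, p^[k] b = a := hp.2 b
  have hb' : ∃ k, p'^[k] b' = a' := hp'.2 b'
  have hS : pathSet p a b = pathSet p' a' b' := by
    rw [← perSet_decode hn hp (b := b), ← perSet_decode hn hp' (b := b'), heq]
  set d : Fin n := ⟨0, hn⟩ with hd
  -- b = b'
  have e2 := d2_b (d := d) hb'
  rw [← hS, ← heq] at e2
  have hbb : b = b' := by rw [← d2_b (d := d) hb, ← e2]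
  -- a = a'
  have f2 := d2_a (d := d) hb'
  rw [← hS, ← heq] at f2
  have haa : a = a' := by rw [← d2_a (d := d) hb, ← f2]
  refine ⟨?_, haa, hbb⟩
  -- p = p'
  funext x
  by_cases hx : x ∈ pathSet p a b
  · obtain ⟨i, hi, hix⟩ := d2_surj d hb hx
    have g1 := d2_p (d := d) hp hi
    have g2 := d2_p (d := d) hp' (i := i) (by rw [← hS]; exact hi)
    rw [← hS, ← heq] at g2
    rw [← hix, g1, g2]
  · have hx' : x ∉ pathSet p' a' b' := by rw [← hS]; exact hx
    rw [← decode_not_mem hx, ← decode_not_mem hx', heq]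


/-- Surjectivity of `decode`: every function arises from a rooted tree fn with a mark. -/
theorem decode_surj (hn : 0 < n) (f : Fin n → Fin n) :
    ∃ p a b, IsRT p a ∧ decode p a b = f := by
  classical
  set d : Fin n := ⟨0, hn⟩ with hd
  obtain ⟨t0, ht0⟩ := exists_iterate_per f d hn
  set M : List (Fin n) := (perSet f).sort (· ≤ ·) with hM
  have hMnd : M.Nodup := Finset.sort_nodup _ _
  have hmemM : ∀ x, x ∈ M ↔ Per f x := fun x => by rw [hM, Finset.mem_sort, mem_perSet]
  set N : List (Fin n) := M.map f with hN
  have hNnd : N.Nodup := hMnd.map_on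
    (fun x hx y hy h => injOn_per ((hmemM x).mp hx) ((hmemM y).mp hy) h)
  have hlen : N.length = M.length := List.length_map _
  have himg : Finset.image f (perSet f) = perSet f := by
    apply Finset.eq_of_subset_of_card_le
    · intro x hx
      rw [Finset.mem_image] at hx
      obtain ⟨y, hy, rfl⟩ := hx
      exact mem_perSet.mpr (per_apply (mem_perSet.mp hy))
    · rw [Finset.card_image_of_injOn
        (fun x hx y hy h => injOn_per (mem_perSet.mp hx) (mem_perSet.mp hy) h)]
  have hmemN : ∀ x, x ∈ N ↔ Per f x := by
    intro x
    rw [hN, List.mem_map]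
    constructor
    · rintro ⟨y, hy, rfl⟩
      exact per_apply ((hmemM y).mp hy)
    · intro hx
      have : x ∈ Finset.image f (perSet f) := by rw [himg]; exact mem_perSet.mpr hx
      rw [Finset.mem_image] at this
      obtain ⟨y, hy, rfl⟩ := this
      exact ⟨y, (hmemM y).mpr (mem_perSet.mp hy), rfl⟩
  have hk : 0 < N.length := by
    rw [List.length_pos_iff]
    intro hnil
    have : f^[t0] d ∈ N := (hmemN _).mpr ht0
    rw [hnil] at this
    simp at this
  set p : Fin n → Fin n := fun x => if x ∈ N then N.getD (N.idxOf x + 1) x else f x with hp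
  set a : Fin n := N.getD (N.length - 1) d with ha
  set b : Fin n := N.getD 0 d with hb2
  -- chain facts
  have hgetDmem : ∀ i, i < N.length → N.getD i d ∈ N := by
    intro i hi
    rw [List.getD_eq_getElem _ _ hi]
    exact List.getElem_mem hi
  have hchain : ∀ i, i + 1 < N.length → p (N.getD i d) = N.getD (i + 1) d := by
    intro i hi
    have hmem : N.getD i d ∈ N := hgetDmem i (by omega)
    rw [hp]
    simp only
    rw [if_pos hmem, List.getD_eq_getElem _ _ (show i < N.length by omega),
      List.Nodup.idxOf_getElem hNnd i _, List.getD_eq_getElem _ _ hi, List.getD_eq_getElem _ _ hi]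
  have hlast : p a = a := by
    have hmem : a ∈ N := by rw [ha]; exact hgetDmem _ (by omega)
    rw [hp]
    simp only
    rw [if_pos hmem, ha, List.getD_eq_getElem _ _ (show N.length - 1 < N.length by omega),
      List.Nodup.idxOf_getElem hNnd _ _]
    rw [List.getD_eq_default]
    omega
  have hoff : ∀ x, ¬Per f x → p x = f x := by
    intro x hx
    rw [hp]
    simp only
    rw [if_neg (fun h => hx ((hmemN x).mp h))]
  -- iterate along the chain
  have hiterchain : ∀ j i, i + j + 1 ≤ N.length → p^[j] (N.getD i d) = N.getD (i + j) d := by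
    intro j
    induction j with
    | zero => intro i _; simp
    | succ j ih =>
      intro i hij
      rw [Function.iterate_succ_apply, hchain i (by omega), ih (i + 1) (by omega)]
      congr 1
      omega
  -- reachability
  have hmemreach : ∀ x, Per f x → ∃ k, p^[k] x = a := by
    intro x hx
    have hxN : x ∈ N := (hmemN x).mpr hx
    have hidx : N.idxOf x < N.length := List.idxOf_lt_length_iff.mpr hxN
    have hx' : N.getD (N.idxOf x) d = x := by
      rw [List.getD_eq_getElem _ _ hidx, List.getElem_idxOf hidx]
    have hch := hiterchain (N.length - 1 - N.idxOf x) (N.idxOf x) (by omega)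
    rw [hx'] at hch
    refine ⟨N.length - 1 - N.idxOf x, ?_⟩
    rw [hch, ha]
    congr 1
    omega
  have hreach : ∀ x, ∃ k, p^[k] x = a := by
    have key : ∀ t (x : Fin n), Per f (f^[t] x) → ∃ k, p^[k] x = a := by
      intro t
      induction t with
      | zero => intro x h; exact hmemreach x (by simpa using h)
      | succ t ih =>
        intro x h
        by_cases hx : Per f x
        · exact hmemreach x hx
        · obtain ⟨k, hk⟩ := ih (f x) (by rwa [Function.iterate_succ_apply] at h)
          exact ⟨k + 1, by rw [Function.iterate_succ_apply, hoff x hx]; exact hk⟩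
    intro x
    obtain ⟨t, ht⟩ := exists_iterate_per f x hn
    exact key t x ht
  have hrt : IsRT p a := ⟨hlast, hreach⟩
  refine ⟨p, a, b, hrt, ?_⟩
  -- iterates of b
  have hiterb : ∀ i, i < N.length → p^[i] b = N.getD i d := by
    intro i hi
    rw [hb2]
    have := hiterchain i 0 (by omega)
    simpa using this
  -- hitting time of b
  have h1 : p^[N.length - 1] b = a := by rw [hiterb _ (by omega), ha]
  have hhit : hit p a b = N.length - 1 := by
    have hle : hit p a b ≤ N.length - 1 := hit_le h1
    by_contra hne
    have hlt : hit p a b < N.length - 1 := by omega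
    have h2 : p^[hit p a b] b = a := hit_spec ⟨_, h1⟩
    rw [hiterb _ (by omega), ha, List.getD_eq_getElem _ _ (by omega : hit p a b < N.length),
      List.getD_eq_getElem _ _ (by omega : N.length - 1 < N.length)] at h2
    have := (hNnd.getElem_inj_iff).mp h2
    omega
  -- path set is the periodic set
  have hps : pathSet p a b = perSet f := by
    ext x
    rw [mem_pathSet, mem_perSet]
    constructor
    · rintro ⟨i, hi, rfl⟩
      rw [hiterb i (by omega)]
      exact (hmemN _).mp (hgetDmem i (by omega))
    · intro hxper
      have hxN := (hmemN x).mpr hxper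
      have hidx : N.idxOf x < N.length := List.idxOf_lt_length_iff.mpr hxN
      refine ⟨N.idxOf x, by omega, ?_⟩
      rw [hiterb _ hidx, List.getD_eq_getElem _ _ hidx, List.getElem_idxOf hidx]
  -- conclude decode p a b = f
  funext x
  by_cases hx : x ∈ pathSet p a b
  · have hxM : x ∈ M := (hmemM x).mpr (mem_perSet.mp (hps ▸ hx))
    have hj : M.idxOf x < M.length := List.idxOf_lt_length_iff.mpr hxM
    rw [decode_mem hx]
    have hLM : (pathSet p a b).sort (· ≤ ·) = M := by rw [hps, hM]
    rw [hLM, hiterb _ (by omega), List.getD_eq_getElem _ _ (by omega : M.idxOf x < N.length)]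
    have hgm : N[List.idxOf x M]'(by rw [hlen]; exact hj)
        = f (M[List.idxOf x M]'hj) := List.getElem_map f
    rw [hgm, List.getElem_idxOf hj]
  · rw [decode_not_mem hx]
    exact hoff x (fun hper => hx (by rw [hps]; exact mem_perSet.mpr hper))


open SimpleGraph

/-- The graph of a rooted-tree function. -/
def graphOf (p : Fin n → Fin n) (a : Fin n) : SimpleGraph (Fin n) where
  Adj x y := x ≠ y ∧ (p x = y ∨ p y = x)
  symm := ⟨by rintro x y ⟨h1, h2⟩; exact ⟨h1.symm, h2.symm⟩⟩
  loopless := ⟨by rintro x ⟨h1, _⟩; exact h1 rfl⟩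

theorem adj_parent {p : Fin n → Fin n} {a x : Fin n} (hp : IsRT p a) (hx : x ≠ a) :
    (graphOf p a).Adj x (p x) := ⟨(ne_fixed hp hx).symm, Or.inl rfl⟩

/-- along an edge, the endpoint with smaller or equal hitting time is the parent. -/
theorem adj_cases {p : Fin n → Fin n} {a x y : Fin n} (hp : IsRT p a)
    (hxy : (graphOf p a).Adj x y) (hlt : hit p a y ≤ hit p a x) : p x = y := by
  rcases hxy.2 with h | h
  · exact h
  · exfalso
    have hy : y ≠ a := by
      rintro rfl
      exact hxy.1.symm (by rw [← h, hp.1])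
    have := hit_apply hp hy
    rw [h] at this
    omega

theorem graphOf_connected {p : Fin n → Fin n} {a : Fin n} (hp : IsRT p a) :
    (graphOf p a).Connected := by
  have key : ∀ m (x : Fin n), hit p a x ≤ m → (graphOf p a).Reachable x a := by
    intro m
    induction m with
    | zero =>
      intro x hx
      have : x = a := (hit_eq_zero_iff (hp.2 x)).mp (Nat.le_zero.mp hx)
      exact this ▸ Reachable.refl x
    | succ m ih =>
      intro x hx
      by_cases hxa : x = a
      · exact hxa ▸ Reachable.refl x
      · have h1 := hit_apply hp hxa
        exact (Adj.reachable (adj_parent hp hxa)).trans (ih (p x) (by omega))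
  rw [connected_iff_exists_forall_reachable]
  exact ⟨a, fun w => (key _ w le_rfl).symm⟩

theorem no_cycle_at_max {p : Fin n → Fin n} {a u : Fin n} (hp : IsRT p a)
    (c : (graphOf p a).Walk u u) (hc : c.IsCycle)
    (hs : ∀ w ∈ c.support, hit p a w ≤ hit p a u) : False := by
  have hlen := hc.three_le_length
  cases c with
  | nil => simp at hlen
  | cons h1 q =>
    rename_i x
    cases q with
    | nil => simp at hlen
    | cons hq r =>
      obtain ⟨y, q₂, h2, hconcat⟩ := Walk.exists_cons_eq_concat hq r
      have hxsupp : x ∈ (Walk.cons h1 (Walk.cons hq r)).support := by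
        simp [Walk.support_cons]
      have hq2supp : q₂.support ⊆ (Walk.cons h1 (Walk.cons hq r)).support := by
        intro w hw
        rw [Walk.support_cons, hconcat]
        rw [Walk.concat_eq_append, Walk.support_append]
        exact List.mem_cons_of_mem _ (List.mem_append_left _ hw)
      have hysupp : y ∈ (Walk.cons h1 (Walk.cons hq r)).support :=
        hq2supp (Walk.end_mem_support q₂)
      have hx_par : p u = x := adj_cases hp h1 (hs x hxsupp)
      have hy_par : p u = y := adj_cases hp h2.symm (hs y hysupp)
      have hxy : x = y := hx_par ▸ hy_par
      subst hxy
      have hnodup : (Walk.cons hq r).support.Nodup := by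
        have := hc.support_nodup
        rwa [Walk.support_cons, List.tail_cons] at this
      have hq2nodup : q₂.support.Nodup := by
        rw [hconcat, Walk.concat_eq_append, Walk.support_append] at hnodup
        exact (List.nodup_append.mp hnodup).1
      have hq2nil : q₂ = Walk.nil := (Walk.isPath_iff_eq_nil (p := q₂)).mp (Walk.IsPath.mk' hq2nodup)
      rw [hq2nil] at hconcat
      have hl1 : (Walk.cons hq r).length = 1 := by
        rw [hconcat, Walk.concat_nil]
        simp
      rw [Walk.length_cons, hl1] at hlen
      omega

theorem graphOf_acyclic {p : Fin n → Fin n} {a : Fin n} (hp : IsRT p a) :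
    (graphOf p a).IsAcyclic := by
  intro v c hc
  obtain ⟨u, hu_mem, hu_max⟩ := (c.support.toFinset).exists_max_image (hit p a)
    ⟨v, by simp [Walk.start_mem_support]⟩
  rw [List.mem_toFinset] at hu_mem
  apply no_cycle_at_max hp (c.rotate _ hu_mem) (hc.rotate hu_mem)
  intro w hw
  apply hu_max
  rw [List.mem_toFinset]
  rw [Walk.support_eq_cons, List.mem_cons] at hw
  rcases hw with hw | hw
  · exact hw ▸ hu_mem
  · exact List.mem_of_mem_tail ((Walk.support_rotate c _ hu_mem).mem_iff.mp hw)

theorem graphOf_isTree {p : Fin n → Fin n} {a : Fin n} (hp : IsRT p a) :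
    (graphOf p a).IsTree := ⟨graphOf_connected hp, graphOf_acyclic hp⟩


/-! distance equals hitting time -/

theorem hit_le_length {p : Fin n → Fin n} {a : Fin n} (hp : IsRT p a) :
    ∀ {x y : Fin n} (w : (graphOf p a).Walk x y), hit p a x ≤ w.length + hit p a y := by
  intro x y w
  induction w with
  | nil => simp
  | @cons u v z h q ih =>
    rw [Walk.length_cons]
    have hadj : hit p a u ≤ hit p a v + 1 := by
      rcases h.2 with h' | h'
      · have hu : u ≠ a := by
          rintro rfl
          exact h.1 (by rw [← h', hp.1])
        have := hit_apply hp hu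
        rw [h'] at this
        omega
      · have hv : v ≠ a := by
          rintro rfl
          exact h.1.symm (by rw [← h', hp.1])
        have := hit_apply hp hv
        rw [h'] at this
        omega
    omega

theorem dist_eq_hit {p : Fin n → Fin n} {a : Fin n} (hp : IsRT p a) (x : Fin n) :
    (graphOf p a).dist x a = hit p a x := by
  apply le_antisymm
  · -- dist ≤ hit, by strong induction
    have key : ∀ m (x : Fin n), hit p a x ≤ m → (graphOf p a).dist x a ≤ hit p a x := by
      intro m
      induction m with
      | zero =>
        intro x hx
        have : x = a := (hit_eq_zero_iff (hp.2 x)).mp (Nat.le_zero.mp hx)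
        subst this; simp [SimpleGraph.dist_self]
      | succ m ih =>
        intro x hx
        by_cases hxa : x = a
        · subst hxa; simp [SimpleGraph.dist_self]
        · have h1 := hit_apply hp hxa
          have htri := (graphOf_connected hp).dist_triangle (u := x) (v := p x) (w := a)
          have hd1 : (graphOf p a).dist x (p x) = 1 :=
            SimpleGraph.dist_eq_one_iff_adj.mpr (adj_parent hp hxa)
          have := ih (p x) (by omega)
          omega
    exact key _ x le_rfl
  · obtain ⟨w, hw⟩ := ((graphOf_connected hp).preconnected x a).exists_walk_length_eq_dist
    rw [← hw]
    have := hit_le_length hp w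
    rwa [hit_self, Nat.add_zero] at this

theorem graphOf_injective {p p' : Fin n → Fin n} {a : Fin n} (hp : IsRT p a) (hp' : IsRT p' a)
    (hG : graphOf p a = graphOf p' a) : p = p' := by
  have hhit : ∀ x, hit p a x = hit p' a x := by
    intro x
    rw [← dist_eq_hit hp x, ← dist_eq_hit hp' x, hG]
  funext x
  by_cases hxa : x = a
  · subst hxa; rw [hp.1, hp'.1]
  · have h1 : (graphOf p a).Adj x (p' x) := hG ▸ adj_parent hp' hxa
    have h2 := hit_apply hp' hxa
    apply adj_cases hp h1
    rw [hhit, hhit]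
    omega

/-! The parent function of a tree with a chosen root. -/

/-- The canonical path from `x` to `a` in a tree. -/
noncomputable def cw {G : SimpleGraph (Fin n)} (hG : G.IsTree) (a x : Fin n) : G.Walk x a :=
  (hG.existsUnique_path x a).exists.choose

theorem cw_isPath {G : SimpleGraph (Fin n)} (hG : G.IsTree) (a x : Fin n) :
    (cw hG a x).IsPath := (hG.existsUnique_path x a).exists.choose_spec

theorem cw_unique {G : SimpleGraph (Fin n)} (hG : G.IsTree) {a x : Fin n}
    {w : G.Walk x a} (hw : w.IsPath) : cw hG a x = w :=
  (hG.existsUnique_path x a).unique (cw_isPath hG a x) hw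

/-- The parent function of a tree with root `a`. -/
noncomputable def pOf {G : SimpleGraph (Fin n)} (hG : G.IsTree) (a x : Fin n) : Fin n :=
  if x = a then a else (cw hG a x).getVert 1

theorem cw_decomp {G : SimpleGraph (Fin n)} (hG : G.IsTree) {a x : Fin n} (hx : x ≠ a) :
    ∃ h : G.Adj x (pOf hG a x),
      cw hG a x = Walk.cons h (cw hG a (pOf hG a x))
        ∧ x ∉ (cw hG a (pOf hG a x)).support := by
  have hpath := cw_isPath hG a x
  rcases e : cw hG a x with _ | @⟨_, y, _, h, q⟩
  · exact absurd rfl hx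
  · have hy : pOf hG a x = y := by
      rw [pOf, if_neg hx, e, Walk.getVert_cons_succ, Walk.getVert_zero]
    rw [e] at hpath
    rw [Walk.cons_isPath_iff] at hpath
    have hq : cw hG a y = q := cw_unique hG hpath.1
    subst hy
    exact ⟨h, by rw [hq], by rw [hq]; exact hpath.2⟩

theorem cw_self {G : SimpleGraph (Fin n)} (hG : G.IsTree) {a : Fin n} :
    cw hG a a = Walk.nil := cw_unique hG Walk.IsPath.nil

theorem pOf_isRT {G : SimpleGraph (Fin n)} (hG : G.IsTree) (a : Fin n) :
    IsRT (pOf hG a) a := by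
  refine ⟨if_pos rfl, ?_⟩
  have key : ∀ m (x : Fin n), (cw hG a x).length ≤ m → ∃ k, (pOf hG a)^[k] x = a := by
    intro m
    induction m with
    | zero =>
      intro x hx
      by_cases hxa : x = a
      · exact ⟨0, hxa⟩
      · obtain ⟨h, hdec, -⟩ := cw_decomp hG hxa
        rw [hdec, Walk.length_cons] at hx
        omega
    | succ m ih =>
      intro x hx
      by_cases hxa : x = a
      · exact ⟨0, hxa⟩
      · obtain ⟨h, hdec, -⟩ := cw_decomp hG hxa
        rw [hdec, Walk.length_cons] at hx
        obtain ⟨k, hk⟩ := ih (pOf hG a x) (by omega)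
        exact ⟨k + 1, by rw [Function.iterate_succ_apply, hk]⟩
  exact fun x => key _ x le_rfl

theorem graphOf_pOf {G : SimpleGraph (Fin n)} (hG : G.IsTree) (a : Fin n) :
    graphOf (pOf hG a) a = G := by
  ext x y
  constructor
  · rintro ⟨hne, h | h⟩
    · have hxa : x ≠ a := by
        rintro rfl
        exact hne (by rw [← h, pOf, if_pos rfl])
      obtain ⟨hadj, -, -⟩ := cw_decomp hG hxa
      exact h ▸ hadj
    · have hya : y ≠ a := by
        rintro rfl
        exact hne.symm (by rw [← h, pOf, if_pos rfl])
      obtain ⟨hadj, -, -⟩ := cw_decomp hG hya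
      exact (h ▸ hadj).symm
  · intro hxy
    refine ⟨hxy.ne, ?_⟩
    by_cases hmem : x ∈ (cw hG a y).support
    · right
      have hya : y ≠ a := by
        rintro rfl
        rw [cw_self] at hmem
        simp at hmem
        exact hxy.ne hmem
      -- takeUntil y→x is the single edge
      have htake : (cw hG a y).takeUntil x hmem = Walk.cons hxy.symm Walk.nil := by
        have h1 : ((cw hG a y).takeUntil x hmem).IsPath :=
          (cw_isPath hG a y).takeUntil hmem
        have h2 : (Walk.cons hxy.symm (Walk.nil : G.Walk x x)).IsPath := by
          rw [Walk.cons_isPath_iff]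
          exact ⟨Walk.IsPath.nil, by simp [hxy.ne']⟩
        have := hG.IsAcyclic.path_unique ⟨_, h1⟩ ⟨_, h2⟩
        exact congrArg Subtype.val this
      have hdecomp : cw hG a y
          = Walk.cons hxy.symm ((cw hG a y).dropUntil x hmem) := by
        conv_lhs => rw [← Walk.take_spec (cw hG a y) hmem]
        rw [htake, Walk.cons_append, Walk.nil_append]
      rw [pOf, if_neg hya, hdecomp, Walk.getVert_cons_succ, Walk.getVert_zero]
    · left
      have hxa : x ≠ a := by
        rintro rfl
        exact hmem (Walk.end_mem_support _)
      have hpath : (Walk.cons hxy (cw hG a y)).IsPath := by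
        rw [Walk.cons_isPath_iff]
        exact ⟨cw_isPath hG a y, hmem⟩
      have : cw hG a x = Walk.cons hxy (cw hG a y) := cw_unique hG hpath
      rw [pOf, if_neg hxa, this, Walk.getVert_cons_succ, Walk.getVert_zero]

/-- The graph-side bijection: rooted tree functions ↔ (tree, root) pairs. -/
theorem card_rooted_eq (hn : 0 < n) :
    Nat.card {pa : (Fin n → Fin n) × Fin n // IsRT pa.1 pa.2}
      = Nat.card {G : SimpleGraph (Fin n) // G.IsTree} * n := by
  have hbij : Function.Bijective
      (fun s : {pa : (Fin n → Fin n) × Fin n // IsRT pa.1 pa.2} =>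
        ((⟨graphOf s.1.1 s.1.2, graphOf_isTree s.2⟩ : {G : SimpleGraph (Fin n) // G.IsTree}),
          s.1.2)) := by
    constructor
    · rintro ⟨⟨p, a⟩, hp⟩ ⟨⟨p', a'⟩, hp'⟩ h
      simp only [Prod.mk.injEq, Subtype.mk.injEq] at h
      obtain ⟨hG, rfl⟩ := h
      have := graphOf_injective hp hp' hG
      subst this
      rfl
    · rintro ⟨⟨G, hG⟩, a⟩
      refine ⟨⟨(pOf hG a, a), pOf_isRT hG a⟩, ?_⟩
      simp only [Prod.mk.injEq, Subtype.mk.injEq]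
      exact ⟨graphOf_pOf hG a, trivial⟩
  rw [Nat.card_eq_of_bijective _ hbij, Nat.card_prod, Nat.card_eq_fintype_card (α := Fin n),
    Fintype.card_fin]


/-! ### Counting -/

theorem card_triple (hn : 0 < n) :
    Nat.card {x : (Fin n → Fin n) × Fin n × Fin n // IsRT x.1 x.2.1} = n ^ n := by
  have hbij : Function.Bijective
      (fun s : {x : (Fin n → Fin n) × Fin n × Fin n // IsRT x.1 x.2.1} =>
        decode s.1.1 s.1.2.1 s.1.2.2) := by
    constructor
    · rintro ⟨⟨p, a, b⟩, hp⟩ ⟨⟨p', a', b'⟩, hp'⟩ h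
      obtain ⟨h1, h2, h3⟩ := decode_inj hn hp hp' h
      simp_all
    · intro f
      obtain ⟨p, a, b, hrt, hdec⟩ := decode_surj hn f
      exact ⟨⟨(p, a, b), hrt⟩, hdec⟩
  rw [Nat.card_eq_of_bijective _ hbij, Nat.card_eq_fintype_card]
  simp [Fintype.card_fun]

theorem card_triple_eq :
    Nat.card {x : (Fin n → Fin n) × Fin n × Fin n // IsRT x.1 x.2.1}
      = Nat.card {pa : (Fin n → Fin n) × Fin n // IsRT pa.1 pa.2} * n := by
  have hbij : Function.Bijective
      (fun s : {x : (Fin n → Fin n) × Fin n × Fin n // IsRT x.1 x.2.1} =>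
        ((⟨(s.1.1, s.1.2.1), s.2⟩ : {pa : (Fin n → Fin n) × Fin n // IsRT pa.1 pa.2}),
          s.1.2.2)) := by
    constructor
    · rintro ⟨⟨p, a, b⟩, hp⟩ ⟨⟨p', a', b'⟩, hp'⟩ h
      simp_all
    · rintro ⟨⟨⟨p, a⟩, h⟩, b⟩
      exact ⟨⟨(p, a, b), h⟩, rfl⟩
  rw [Nat.card_eq_of_bijective _ hbij, Nat.card_prod, Nat.card_eq_fintype_card (α := Fin n),
    Fintype.card_fin]

end Cayley

/-- Cayley's formula: the number of labeled trees on `n ≥ 1` vertices is `n^(n-2)`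
(with natural subtraction, so for `n = 1` the right-hand side is `1^0 = 1`). -/
theorem cayley_formula (n : ℕ) (hn : 1 ≤ n) :
    Nat.card {G : SimpleGraph (Fin n) // G.IsTree} = n ^ (n - 2) := by
  have h0 : 0 < n := hn
  have key : Nat.card {G : SimpleGraph (Fin n) // G.IsTree} * n * n = n ^ n := by
    rw [← Cayley.card_rooted_eq h0, ← Cayley.card_triple_eq, Cayley.card_triple h0]
  rcases Nat.lt_or_ge n 2 with h2 | h2
  · interval_cases n
    · simpa using key
  · have hexp : n ^ n = n ^ (n - 2) * n * n := by
      have : n = (n - 2) + 1 + 1 := by omega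
      calc n ^ n = n ^ ((n - 2) + 1 + 1) := by rw [← this]
        _ = n ^ (n - 2) * n * n := by rw [pow_succ, pow_succ]
    rw [hexp] at key
    have := Nat.eq_of_mul_eq_mul_right h0 key
    exact Nat.eq_of_mul_eq_mul_right h0 this
end

section
/- Let E be a finite hypergraph G = (V, E), i.e. E a set of subsets of V each of cardinality at least 2. Then sum over A in E of (|A| - 1), minus |V|, plus c(G) is nonnegative, where c(G) is the number of connected components of G; equality holds if and only if G is a hyperforest (contains no hypercycle). -/
open Relation Finset


/-- Two vertices are adjacent in a hypergraph if some hyperedge contains both. -/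
def HGAdj {V : Type} (E : Finset (Finset V)) (a b : V) : Prop :=
  ∃ A ∈ E, a ∈ A ∧ b ∈ A

/-- A hypergraph (on a fixed vertex type) is connected if every pair of vertices
is joined by a walk, i.e. by a chain of adjacencies. -/
def HGConnected {V : Type} (E : Finset (Finset V)) : Prop :=
  ∀ a b : V, Relation.ReflTransGen (HGAdj E) a b

/-- A hypergraph contains a (hyper)cycle: a closed walk
`(v 0, e 0, v 1, e 1, …, e (k-1), v k)` of length `k ≥ 2` with distinct
vertices `v 0, …, v (k-1)`, `v k = v 0`, and distinct hyperedges. -/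
def HasHGCycle {V : Type} (E : Finset (Finset V)) : Prop :=
  ∃ (k : ℕ) (v : ℕ → V) (e : ℕ → Finset V),
    2 ≤ k ∧ (∀ i < k, e i ∈ E) ∧ (∀ i < k, v i ∈ e i ∧ v (i + 1) ∈ e i) ∧
    v k = v 0 ∧ (∀ i < k, ∀ j < k, v i = v j → i = j) ∧
    (∀ i < k, ∀ j < k, e i = e j → i = j)


section Aux
variable {V : Type}

lemma hgadj_symm (E : Finset (Finset V)) : Symmetric (HGAdj E) :=
  fun _ _ ⟨A, hA, ha, hb⟩ => ⟨A, hA, hb, ha⟩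

lemma quot_mk_eq (E : Finset (Finset V)) (a b : V) :
    Quot.mk (HGAdj E) a = Quot.mk (HGAdj E) b ↔ ReflTransGen (HGAdj E) a b := by
  rw [Quot.eq]
  constructor
  · intro h
    induction h with
    | rel x y h => exact ReflTransGen.single h
    | refl => exact .refl
    | symm x y _ ih => exact ((@ReflTransGen.stdSymm _ _ ⟨hgadj_symm E⟩).symm _ _) ih
    | trans x y z _ _ ih1 ih2 => exact ih1.trans ih2
  · intro h
    induction h with
    | refl => exact EqvGen.refl _
    | tail _ h ih => exact EqvGen.trans _ _ _ ih (EqvGen.rel _ _ h)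

def IsWalk (E : Finset (Finset V)) (v : ℕ → V) (e : ℕ → Finset V) (m : ℕ) : Prop :=
  ∀ i < m, e i ∈ E ∧ v i ∈ e i ∧ v (i + 1) ∈ e i

lemma isWalk_rtg (E : Finset (Finset V)) (v : ℕ → V) (e : ℕ → Finset V) :
    ∀ m, IsWalk E v e m → ReflTransGen (HGAdj E) (v 0) (v m) := by
  intro m
  induction m with
  | zero => exact fun _ => .refl
  | succ m ih =>
    intro h
    refine (ih (fun i hi => h i (Nat.lt_succ_of_lt hi))).tail ?_
    obtain ⟨h1, h2, h3⟩ := h m (Nat.lt_succ_self m)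
    exact ⟨e m, h1, h2, h3⟩

lemma rtg_walk {E : Finset (Finset V)} {a b : V} (h : ReflTransGen (HGAdj E) a b) :
    ∃ m, ∃ v : ℕ → V, ∃ e : ℕ → Finset V, IsWalk E v e m ∧ v 0 = a ∧ v m = b := by
  induction h with
  | refl => exact ⟨0, fun _ => a, fun _ => ∅, fun i hi => absurd hi (Nat.not_lt_zero i), rfl, rfl⟩
  | @tail b' c _ hbc ih =>
    obtain ⟨m, v, e, hw, h0, hm⟩ := ih
    obtain ⟨A, hA, hb1, hc1⟩ := hbc
    refine ⟨m + 1, fun i => if i ≤ m then v i else c, fun i => if i < m then e i else A,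
      ?_, ?_, ?_⟩
    · intro i hi
      rcases Nat.lt_or_ge i m with h' | h'
      · have : i ≤ m := h'.le
        have h2 : i + 1 ≤ m := h'
        simpa [h', this, h2] using hw i h'
      · have : i = m := by omega
        subst this
        simp only [if_pos (le_refl i), if_neg (lt_irrefl i), if_neg (by omega : ¬ i + 1 ≤ i)]
        exact ⟨hA, hm ▸ hb1, hc1⟩
    · simp [h0]
    · simp

lemma splice {E : Finset (Finset V)} {v : ℕ → V} {e : ℕ → Finset V} {m : ℕ}
    (h : IsWalk E v e m) (i d : ℕ) (hd : 0 < d) (him : i + d ≤ m)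
    (hvi : i + d < m → v i ∈ e (i + d)) (hlast : i + d = m → v i = v m) :
    ∃ v' e', IsWalk E v' e' (m - d) ∧ v' 0 = v 0 ∧ v' (m - d) = v m := by
  refine ⟨fun k => if k ≤ i then v k else v (k + d),
    fun k => if k < i then e k else e (k + d), ?_, ?_, ?_⟩
  · intro k hk
    rcases Nat.lt_trichotomy k i with h' | h' | h'
    · have h1 : k ≤ i := h'.le
      have h2 : k + 1 ≤ i := h'
      simpa [h', h1, h2] using h k (by omega)
    · subst h'
      have h1 : k + d < m := by omega
      simp only [if_pos (le_refl k), if_neg (lt_irrefl k), if_neg (by omega : ¬ k + 1 ≤ k)]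
      obtain ⟨he1, _, he3⟩ := h (k + d) h1
      exact ⟨he1, hvi h1, by simpa [Nat.add_right_comm] using he3⟩
    · have h1 : ¬ k < i := by omega
      have h2 : ¬ k ≤ i := by omega
      have h3 : ¬ k + 1 ≤ i := by omega
      simpa [h1, h2, h3, Nat.add_right_comm] using h (k + d) (by omega)
  · simp
  · rcases Nat.lt_or_ge i (m - d) with h' | h'
    · have h2 : ¬ m - d ≤ i := by omega
      simp only [if_neg h2]
      congr 1
      omega
    · have h2 : m - d = i := by omega
      have h3 : i + d = m := by omega
      simp only [h2, if_pos (le_refl i)]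
      exact hlast (by omega)

lemma exists_path {E : Finset (Finset V)} {a b : V} (hab : a ≠ b)
    (h : ReflTransGen (HGAdj E) a b) :
    ∃ m, ∃ v : ℕ → V, ∃ e : ℕ → Finset V, 1 ≤ m ∧ IsWalk E v e m ∧ v 0 = a ∧ v m = b ∧
      (∀ i ≤ m, ∀ j ≤ m, v i = v j → i = j) ∧
      (∀ i < m, ∀ j < m, e i = e j → i = j) := by
  have hex : ∃ m, ∃ v : ℕ → V, ∃ e : ℕ → Finset V, IsWalk E v e m ∧ v 0 = a ∧ v m = b :=
    rtg_walk h
  classical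
  obtain ⟨v, e, hw, h0, hm⟩ := Nat.find_spec hex
  set m := Nat.find hex with hmdef
  have hmin : ∀ m' < m, ¬ ∃ v : ℕ → V, ∃ e : ℕ → Finset V,
      IsWalk E v e m' ∧ v 0 = a ∧ v m' = b := fun m' hm' => Nat.find_min hex hm'
  have hm1 : 1 ≤ m := by
    rcases Nat.eq_zero_or_pos m with h' | h'
    · exact absurd (h0 ▸ h' ▸ hm) hab
    · exact h'
  -- no shorter walk exists, from splicing
  have key : ∀ i d, 0 < d → i + d ≤ m → (i + d < m → v i ∈ e (i + d)) →
      (i + d = m → v i = v m) → False := by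
    intro i d hd him hvi hlast
    obtain ⟨v', e', hw', h0', hm'⟩ := splice hw i d hd him hvi hlast
    exact hmin (m - d) (by omega) ⟨v', e', hw', h0'.trans h0, hm'.trans hm⟩
  have hvinj : ∀ i ≤ m, ∀ j ≤ m, v i = v j → i = j := by
    have base : ∀ i j, i < j → j ≤ m → v i = v j → False := by
      intro i j hij hjm hv
      refine key i (j - i) (by omega) (by omega) ?_ ?_
      · intro hlt
        have := (hw j (by omega)).2.1
        rw [show i + (j - i) = j by omega]
        exact hv ▸ this
      · intro heq
        rw [hv, show j = m by omega]
    intro i hi j hj hv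
    rcases Nat.lt_trichotomy i j with h' | h' | h'
    · exact absurd (base i j h' hj hv) not_false
    · exact h'
    · exact absurd (base j i h' hi hv.symm) not_false
  refine ⟨m, v, e, hm1, hw, h0, hm, hvinj, ?_⟩
  intro i hi j hj he
  by_contra hne
  have base : ∀ i j, i < j → j < m → e i = e j → False := by
    intro i j hij hjm he
    refine key i (j - i) (by omega) (by omega) ?_ ?_
    · intro _
      rw [show i + (j - i) = j by omega, ← he]
      exact (hw i (by omega)).2.1
    · intro heq; omega
  rcases Nat.lt_trichotomy i j with h' | h' | h'
  · exact base i j h' hj he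
  · exact hne h'
  · exact base j i h' hi he.symm

lemma rtg_insert_iff [DecidableEq V] {E : Finset (Finset V)} {A : Finset V} {x y : V} :
    ReflTransGen (HGAdj (insert A E)) x y ↔
      ReflTransGen (HGAdj E) x y ∨
        ((∃ a ∈ A, ReflTransGen (HGAdj E) x a) ∧ (∃ b ∈ A, ReflTransGen (HGAdj E) y b)) := by
  constructor
  · intro h
    induction h with
    | refl => exact Or.inl .refl
    | @tail y z _ hyz ih =>
      obtain ⟨B, hB, hy, hz⟩ := hyz
      rcases Finset.mem_insert.1 hB with hBA | hBE
      · subst hBA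
        rcases ih with h1 | ⟨⟨a, ha, hxa⟩, _⟩
        · exact Or.inr ⟨⟨y, hy, h1⟩, ⟨z, hz, .refl⟩⟩
        · exact Or.inr ⟨⟨a, ha, hxa⟩, ⟨z, hz, .refl⟩⟩
      · rcases ih with h1 | ⟨hx', ⟨b, hb, hyb⟩⟩
        · exact Or.inl (h1.tail ⟨B, hBE, hy, hz⟩)
        · exact Or.inr ⟨hx', ⟨b, hb,
            (ReflTransGen.single (hgadj_symm E ⟨B, hBE, hy, hz⟩)).trans hyb⟩⟩
  · intro h
    have mono : ∀ {u w : V}, ReflTransGen (HGAdj E) u w →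
        ReflTransGen (HGAdj (insert A E)) u w := by
      intro u w h'
      exact ReflTransGen.mono (r := HGAdj E) (p := HGAdj (insert A E)) (fun p q (hpq : HGAdj E p q) => by obtain ⟨B, hB, h1, h2⟩ := hpq; exact ⟨B, Finset.mem_insert_of_mem hB, h1, h2⟩) u w h'
    rcases h with h1 | ⟨⟨a, ha, hxa⟩, ⟨b, hb, hyb⟩⟩
    · exact mono h1
    · have hab : ReflTransGen (HGAdj (insert A E)) a b :=
        ReflTransGen.single ⟨A, Finset.mem_insert_self A E, ha, hb⟩
      exact ((mono hxa).trans hab).trans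
        ((@ReflTransGen.stdSymm _ _ ⟨hgadj_symm _⟩).symm _ _ (mono hyb))

lemma card_quot_insert [DecidableEq V] [Fintype V] {E : Finset (Finset V)} {A : Finset V}
    [DecidableEq (Quot (HGAdj E))] (hA : A.Nonempty) :
    Nat.card (Quot (HGAdj (insert A E))) + (A.image (Quot.mk (HGAdj E))).card
      = Nat.card (Quot (HGAdj E)) + 1 := by
  classical
  letI : Finite (Quot (HGAdj E)) := Finite.of_surjective _ (Quot.mk_surjective)
  letI : Finite (Quot (HGAdj (insert A E))) := Finite.of_surjective _ (Quot.mk_surjective)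
  letI : Fintype (Quot (HGAdj E)) := Fintype.ofFinite _
  letI : Fintype (Quot (HGAdj (insert A E))) := Fintype.ofFinite _
  set q : V → Quot (HGAdj E) := Quot.mk (HGAdj E) with hq
  set S : Finset (Quot (HGAdj E)) := A.image q with hS
  have hmono : ∀ x y : V, HGAdj E x y → HGAdj (insert A E) x y :=
    fun x y ⟨B, hB, h1, h2⟩ => ⟨B, Finset.mem_insert_of_mem hB, h1, h2⟩
  set φ : Quot (HGAdj E) → Quot (HGAdj (insert A E)) := Quot.map id hmono with hφ
  have hφmk : ∀ x : V, φ (q x) = Quot.mk (HGAdj (insert A E)) x := fun x => rfl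
  obtain ⟨a0, ha0⟩ := hA
  set y0 : Quot (HGAdj (insert A E)) := Quot.mk _ a0 with hy0
  have hkey : ∀ x z : V, (Quot.mk (HGAdj (insert A E)) x = Quot.mk (HGAdj (insert A E)) z)
      ↔ (q x = q z ∨ (q x ∈ S ∧ q z ∈ S)) := by
    intro x z
    rw [quot_mk_eq, rtg_insert_iff]
    have himg : ∀ w : V, (∃ a ∈ A, Relation.ReflTransGen (HGAdj E) w a) ↔ q w ∈ S := by
      intro w
      simp only [hS, Finset.mem_image]
      constructor
      · rintro ⟨a, ha, hwa⟩
        exact ⟨a, ha, ((quot_mk_eq E a w).2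
          ((@ReflTransGen.stdSymm _ _ ⟨hgadj_symm E⟩).symm _ _ hwa))⟩
      · rintro ⟨a, ha, hqa⟩
        exact ⟨a, ha, (@ReflTransGen.stdSymm _ _ ⟨hgadj_symm E⟩).symm _ _ ((quot_mk_eq E a w).1 hqa)⟩
    rw [← quot_mk_eq, himg, himg]
  have ha0S : q a0 ∈ S := Finset.mem_image_of_mem q ha0
  have hinj : ∀ x z : V, φ (q x) = φ (q z) → q x = q z ∨ φ (q x) = y0 := by
    intro x z h
    rcases (hkey x z).1 h with h1 | ⟨hx, _⟩
    · exact Or.inl h1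
    · exact Or.inr ((hkey x a0).2 (Or.inr ⟨hx, ha0S⟩))
  have hcount := Finset.card_eq_sum_card_fiberwise
    (f := φ) (s := Finset.univ) (t := Finset.univ) (fun x _ => Finset.mem_univ (φ x))
  have hfib0 : Finset.univ.filter (fun x => φ x = y0) = S := by
    ext x
    induction x using Quot.ind with
    | _ x =>
      simp only [Finset.mem_filter, Finset.mem_univ, true_and]
      constructor
      · intro h
        rcases (hkey x a0).1 h with h1 | ⟨h2, _⟩
        · show q x ∈ S
          rw [h1]; exact ha0S
        · exact h2
      · intro h
        exact (hkey x a0).2 (Or.inr ⟨h, ha0S⟩)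
  have hfib1 : ∀ y : Quot (HGAdj (insert A E)), y ≠ y0 →
      (Finset.univ.filter (fun x => φ x = y)).card = 1 := by
    intro y hy
    obtain ⟨z, hz⟩ := Quot.mk_surjective y
    rw [Finset.card_eq_one]
    refine ⟨q z, ?_⟩
    ext w
    induction w using Quot.ind with
    | _ w =>
      simp only [Finset.mem_filter, Finset.mem_univ, true_and, Finset.mem_singleton]
      constructor
      · intro h
        have h' : φ (q w) = φ (q z) := by rw [h, hφmk, hz]
        rcases hinj w z h' with h1 | h1
        · exact h1
        · exact absurd (h.symm.trans h1) hy
      · intro h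
        rw [h, hφmk, hz]
  have hy0pos : 1 ≤ Fintype.card (Quot (HGAdj (insert A E))) :=
    Fintype.card_pos_iff.2 ⟨y0⟩
  rw [Nat.card_eq_fintype_card, Nat.card_eq_fintype_card]
  have hsum : (Finset.univ : Finset (Quot (HGAdj E))).card
      = ∑ y ∈ (Finset.univ : Finset (Quot (HGAdj (insert A E)))) \ {y0},
          (Finset.univ.filter (fun x => φ x = y)).card
        + (Finset.univ.filter (fun x => φ x = y0)).card := by
    rw [hcount]
    exact Finset.sum_eq_sum_sdiff_singleton_add (Finset.mem_univ y0) _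
  have hsum1 : ∑ y ∈ (Finset.univ : Finset (Quot (HGAdj (insert A E)))) \ {y0},
      (Finset.univ.filter (fun x => φ x = y)).card
      = Fintype.card (Quot (HGAdj (insert A E))) - 1 := by
    rw [Finset.sum_congr rfl (fun y hy => hfib1 y (by
      simp only [Finset.mem_sdiff, Finset.mem_singleton] at hy; exact hy.2))]
    simp [Finset.card_sdiff_of_subset (Finset.singleton_subset_iff.2 (Finset.mem_univ y0)),
      Finset.card_univ]
  rw [hfib0] at hsum
  rw [hsum1] at hsum
  have hcu : (Finset.univ : Finset (Quot (HGAdj E))).card = Fintype.card (Quot (HGAdj E)) :=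
    Finset.card_univ
  omega

lemma cycle_insert [DecidableEq V] {E : Finset (Finset V)} {A : Finset V} (hAE : A ∉ E)
    (hA2 : 2 ≤ A.card) :
    ¬ HasHGCycle (insert A E) ↔
      ¬ HasHGCycle E ∧ Set.InjOn (Quot.mk (HGAdj E)) ↑A := by
  constructor
  · intro hnc
    constructor
    · rintro ⟨k, v, e, hk, he, hstep, hclose, hvinj, heinj⟩
      exact hnc ⟨k, v, e, hk, fun i hi => Finset.mem_insert_of_mem (he i hi),
        hstep, hclose, hvinj, heinj⟩
    · intro a ha b hb hq
      by_contra hab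
      have hrtg : ReflTransGen (HGAdj E) a b := (quot_mk_eq E a b).1 hq
      obtain ⟨m, v, e, hm1, hw, h0, hm, hvinj, heinj⟩ := exists_path hab hrtg
      refine hnc ⟨m + 1, fun i => if i = m + 1 then a else v i,
        fun i => if i = m then A else e i, by omega, ?_, ?_, ?_, ?_, ?_⟩
      · intro i hi
        rcases Nat.lt_or_ge i m with h' | h'
        · simp only [if_neg (by omega : i ≠ m)]
          exact Finset.mem_insert_of_mem (hw i h').1
        · have : i = m := by omega
          simp [this, Finset.mem_insert_self]
      · intro i hi
        rcases Nat.lt_or_ge i m with h' | h'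
        · simp only [if_neg (by omega : i ≠ m), if_neg (by omega : i ≠ m + 1),
            if_neg (by omega : i + 1 ≠ m + 1)]
          exact ⟨(hw i h').2.1, (hw i h').2.2⟩
        · have hi' : i = m := by omega
          subst hi'
          simp only [if_pos rfl, if_neg (by omega : i ≠ i + 1)]
          exact ⟨hm ▸ (Finset.mem_coe.1 hb), by simp [Finset.mem_coe.1 ha]⟩
      · simp only [if_pos rfl, if_neg (by omega : 0 ≠ m + 1)]
        exact h0.symm
      · intro i hi j hj hv
        have hi' : i ≠ m + 1 := by omega
        have hj' : j ≠ m + 1 := by omega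
        simp only [if_neg hi', if_neg hj'] at hv
        exact hvinj i (by omega) j (by omega) hv
      · intro i hi j hj he'
        rcases Nat.lt_or_ge i m with h1 | h1 <;> rcases Nat.lt_or_ge j m with h2 | h2
        · simp only [if_neg (by omega : i ≠ m), if_neg (by omega : j ≠ m)] at he'
          exact heinj i h1 j h2 he'
        · have hjm : j = m := by omega
          have he2 : e i = A := by simpa [hjm, show ¬ i = m by omega] using he'
          exact absurd (he2 ▸ (hw i h1).1) hAE
        · have him : i = m := by omega
          have he2 : e j = A := by simpa [him, show ¬ j = m by omega] using he'.symm
          exact absurd (he2 ▸ (hw j h2).1) hAE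
        · omega
  · rintro ⟨hnc, hinj⟩ ⟨k, v, e, hk, he, hstep, hclose, hvinj, heinj⟩
    by_cases hall : ∀ i < k, e i ≠ A
    · refine hnc ⟨k, v, e, hk, fun i hi => ?_, hstep, hclose, hvinj, heinj⟩
      exact (Finset.mem_insert.1 (he i hi)).resolve_left (hall i hi)
    · push_neg at hall
      obtain ⟨i0, hi0k, hi0e⟩ := hall
      have hEmem : ∀ j < k, j ≠ i0 → e j ∈ E := by
        intro j hj hji
        refine (Finset.mem_insert.1 (he j hj)).resolve_left ?_
        intro hh
        exact hji (heinj j hj i0 hi0k (hh.trans hi0e.symm))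
      have c1 : ∀ j, i0 + 1 ≤ j → j ≤ k → ReflTransGen (HGAdj E) (v (i0 + 1)) (v j) := by
        intro j
        induction j with
        | zero => intro h; omega
        | succ j ih =>
          intro h1 h2
          rcases Nat.lt_or_ge (i0 + 1) (j + 1) with h' | h'
          · have hj : j < k := by omega
            exact (ih (by omega) (by omega)).tail
              ⟨e j, hEmem j hj (by omega), (hstep j hj).1, (hstep j hj).2⟩
          · have : j + 1 = i0 + 1 := by omega
            rw [this]
      have c2 : ∀ j, j ≤ i0 → ReflTransGen (HGAdj E) (v 0) (v j) := by
        intro j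
        induction j with
        | zero => intro _; exact .refl
        | succ j ih =>
          intro h1
          have hj : j < k := by omega
          exact (ih (by omega)).tail
            ⟨e j, hEmem j hj (by omega), (hstep j hj).1, (hstep j hj).2⟩
      have hconn : ReflTransGen (HGAdj E) (v (i0 + 1)) (v i0) := by
        have h1 := c1 k (by omega) le_rfl
        rw [hclose] at h1
        exact h1.trans (c2 i0 le_rfl)
      have hvA : v i0 ∈ A ∧ v (i0 + 1) ∈ A := by
        have := hstep i0 hi0k
        rw [hi0e] at this
        exact this
      have hne : v i0 ≠ v (i0 + 1) := by
        intro hv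
        rcases Nat.lt_or_ge (i0 + 1) k with h' | h'
        · have := hvinj i0 hi0k (i0 + 1) h' hv
          omega
        · have hik : i0 + 1 = k := by omega
          rw [hik, hclose] at hv
          have := hvinj i0 hi0k 0 (by omega) hv
          omega
      exact hne (hinj (Finset.mem_coe.2 hvA.1) (Finset.mem_coe.2 hvA.2)
        ((quot_mk_eq E _ _).2 ((@ReflTransGen.stdSymm _ _ ⟨hgadj_symm E⟩).symm _ _ hconn)))

lemma card_quot_empty [Fintype V] :
    Nat.card (Quot (HGAdj (∅ : Finset (Finset V)))) = Fintype.card V := by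
  have hbij : Function.Bijective (Quot.mk (HGAdj (∅ : Finset (Finset V)))) := by
    constructor
    · intro a b h
      have h' := (quot_mk_eq _ a b).1 h
      cases h'.cases_head with
      | inl h => exact h
      | inr h => obtain ⟨c, ⟨B, hB, _⟩, _⟩ := h; exact absurd hB (Finset.notMem_empty B)
    · exact Quot.mk_surjective
  rw [← Nat.card_eq_fintype_card]
  exact (Nat.card_eq_of_bijective _ hbij).symm

lemma main_aux [Fintype V] [DecidableEq V] (E : Finset (Finset V)) :
    (∀ A ∈ E, 2 ≤ A.card) →
    (0 ≤ (∑ A ∈ E, ((A.card : ℤ) - 1)) - Fintype.card V + Nat.card (Quot (HGAdj E)) ∧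
    ((∑ A ∈ E, ((A.card : ℤ) - 1)) - Fintype.card V + Nat.card (Quot (HGAdj E)) = 0 ↔
      ¬ HasHGCycle E)) := by
  classical
  induction E using Finset.induction_on with
  | empty =>
    intro _
    rw [card_quot_empty]
    simp only [Finset.sum_empty]
    refine ⟨by omega, ?_⟩
    constructor
    · rintro - ⟨k, v, e, hk, he, -⟩
      exact Finset.notMem_empty _ (he 0 (by omega))
    · intro _
      omega
  | @insert A E' hAE ih =>
    intro hE
    have hE' : ∀ B ∈ E', 2 ≤ B.card := fun B hB => hE B (Finset.mem_insert_of_mem hB)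
    have hA2 : 2 ≤ A.card := hE A (Finset.mem_insert_self A E')
    have hAne : A.Nonempty := Finset.card_pos.1 (by omega)
    obtain ⟨ih1, ih2⟩ := ih hE'
    have hcard := card_quot_insert (E := E') (A := A) hAne
    have ht_le : (A.image (Quot.mk (HGAdj E'))).card ≤ A.card := Finset.card_image_le
    have ht_eq : ((A.image (Quot.mk (HGAdj E'))).card = A.card) ↔
        Set.InjOn (Quot.mk (HGAdj E')) ↑A := Finset.card_image_iff
    rw [Finset.sum_insert hAE]
    constructor
    · omega
    · rw [cycle_insert hAE hA2, ← ih2, ← ht_eq]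
      constructor
      · intro h
        exact ⟨by omega, by omega⟩
      · rintro ⟨h1, h2⟩
        omega

end Aux

/-- For a hypergraph `G = (Fin n, E)` with all hyperedges of cardinality at least 2,
`∑_{A ∈ E} (|A| - 1) - |V| + c(G) ≥ 0`, where `c(G)` is the number of connected
components (equivalence classes of vertices under connectivity); equality holds
if and only if `G` is a hyperforest, i.e. contains no hypercycle. -/
theorem hypergraph_euler_inequality (n : ℕ) (E : Finset (Finset (Fin n)))
    (hE : ∀ A ∈ E, 2 ≤ A.card) :
    0 ≤ (∑ A ∈ E, ((A.card : ℤ) - 1)) - n + Nat.card (Quot (HGAdj E)) ∧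
    ((∑ A ∈ E, ((A.card : ℤ) - 1)) - n + Nat.card (Quot (HGAdj E)) = 0 ↔
      ¬ HasHGCycle E) := by
  have h := main_aux E hE
  simpa [Fintype.card_fin] using h
end

section
/- The number of rooted spanning hyperforests with exactly r components of the complete k-uniform hypergraph on n labeled vertices equals binomial(n-1, r-1) * (n-r)! / (((n-r)/(k-1))! * ((k-1)!)^((n-r)/(k-1))) * n^((n-r)/(k-1)), when k - 1 divides n - r; it is 0 otherwise. -/
set_option linter.unusedSectionVars false
set_option maxHeartbeats 1000000

namespace HF

variable {V : Type} [DecidableEq V]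

def Conn (E : Finset (Finset V)) : V → V → Prop := Relation.ReflTransGen (HGAdj E)

lemma hgadj_symm {E : Finset (Finset V)} : Symmetric (HGAdj E) :=
  fun _ _ ⟨A, hA, ha, hb⟩ => ⟨A, hA, hb, ha⟩

lemma conn_refl {E : Finset (Finset V)} (a : V) : Conn E a a := Relation.ReflTransGen.refl

lemma conn_symm {E : Finset (Finset V)} {a b : V} (h : Conn E a b) : Conn E b a :=
  by
  induction h with
  | refl => exact Relation.ReflTransGen.refl
  | tail _ h2 ih => exact Relation.ReflTransGen.head (hgadj_symm h2) ih

lemma conn_trans {E : Finset (Finset V)} {a b c : V} (h : Conn E a b) (h' : Conn E b c) :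
    Conn E a c := Relation.ReflTransGen.trans h h'

lemma adj_conn {E : Finset (Finset V)} {a b : V} (h : HGAdj E a b) : Conn E a b :=
  Relation.ReflTransGen.single h

lemma conn_of_mem_edge {E : Finset (Finset V)} {A : Finset V} (hA : A ∈ E) {a b : V}
    (ha : a ∈ A) (hb : b ∈ A) : Conn E a b := adj_conn ⟨A, hA, ha, hb⟩

lemma hgadj_mono {E E' : Finset (Finset V)} (h : E ⊆ E') {a b : V} (hab : HGAdj E a b) :
    HGAdj E' a b := by obtain ⟨A, hA, ha, hb⟩ := hab; exact ⟨A, h hA, ha, hb⟩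

lemma conn_mono {E E' : Finset (Finset V)} (h : E ⊆ E') {a b : V} (hab : Conn E a b) :
    Conn E' a b := Relation.ReflTransGen.mono (fun _ _ => hgadj_mono h) _ _ hab

lemma conn_empty {a b : V} (h : Conn (∅ : Finset (Finset V)) a b) : a = b := by
  induction h with
  | refl => rfl
  | tail _ h2 ih => obtain ⟨A, hA, -⟩ := h2; exact absurd hA (Finset.notMem_empty _)

/-- walks -/
def IsWalk (E : Finset (Finset V)) (t : ℕ) (w : ℕ → V) (f : ℕ → Finset V) : Prop :=
  ∀ i < t, f i ∈ E ∧ w i ∈ f i ∧ w (i + 1) ∈ f i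

lemma conn_of_steps {E : Finset (Finset V)} (w : ℕ → V) {a b : ℕ} (hab : a ≤ b)
    (h : ∀ j, a ≤ j → j < b → HGAdj E (w j) (w (j + 1))) : Conn E (w a) (w b) := by
  induction b, hab using Nat.le_induction with
  | base => exact conn_refl _
  | succ b hab ih =>
      exact conn_trans (ih (fun j hj hj' => h j hj (by omega)))
        (adj_conn (h b hab (by omega)))

lemma conn_of_walk {E : Finset (Finset V)} {t : ℕ} {w : ℕ → V} {f : ℕ → Finset V}
    (hw : IsWalk E t w f) : Conn E (w 0) (w t) :=
  conn_of_steps w (Nat.zero_le t) (fun j _ hj => ⟨f j, (hw j hj).1, (hw j hj).2.1, (hw j hj).2.2⟩)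

lemma conn_iff_walk {E : Finset (Finset V)} {a b : V} :
    Conn E a b ↔ ∃ t w f, IsWalk E t w f ∧ w 0 = a ∧ w t = b := by
  constructor
  · intro h
    induction h with
    | refl => exact ⟨0, fun _ => a, fun _ => ∅, fun i hi => absurd hi (Nat.not_lt_zero i), rfl, rfl⟩
    | @tail b' c hab hbc ih =>
        obtain ⟨t, w, f, hw, h0, ht⟩ := ih
        obtain ⟨A, hA, hb', hc⟩ := hbc
        refine ⟨t + 1, fun i => if i ≤ t then w i else c, fun i => if i < t then f i else A,
          ?_, by simp [h0], by simp⟩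
        intro i hi
        rcases lt_or_ge i t with h | h
        · simpa [h, Nat.le_of_lt h, show i + 1 ≤ t from h, show i ≤ t from Nat.le_of_lt h]
            using hw i h
        · have : i = t := by omega
          subst this
          simp [ht, hA, hb', hc]
  · rintro ⟨t, w, f, hw, rfl, rfl⟩
    exact conn_of_walk hw

/-- shortening a walk with a repeated vertex -/
lemma shorten_v {E : Finset (Finset V)} {t : ℕ} {w : ℕ → V} {f : ℕ → Finset V}
    (hw : IsWalk E t w f) {i j : ℕ} (hij : i < j) (hjt : j ≤ t) (hvv : w i = w j) :
    ∃ w' f', IsWalk E (t - (j - i)) w' f' ∧ w' 0 = w 0 ∧ w' (t - (j - i)) = w t := by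
  set d := j - i with hd
  refine ⟨fun s => if s ≤ i then w s else w (s + d), fun s => if s < i then f s else f (s + d),
    ?_, by simp, ?_⟩
  · intro s hs
    rcases lt_or_ge s i with h | h
    · simpa [h, Nat.le_of_lt h, show s + 1 ≤ i from h] using hw s (by omega)
    · have h1 : ¬ (s + 1 ≤ i) := by omega
      have h2 : ¬ (s < i) := by omega
      have hsd : s + d < t := by omega
      have H := hw (s + d) hsd
      simp only [if_neg h1, if_neg h2]
      by_cases h3 : s ≤ i
      · have hws : w s = w (s + d) := by
          rw [show s + d = j from by omega, show s = i from by omega, hvv]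
        simp only [if_pos h3]
        exact ⟨H.1, by rw [hws]; exact H.2.1,
          by rw [show s + 1 + d = s + d + 1 from by omega]; exact H.2.2⟩
      · simp only [if_neg h3]
        exact ⟨H.1, H.2.1,
          by rw [show s + 1 + d = s + d + 1 from by omega]; exact H.2.2⟩
  · have hge : t - d ≥ i := by omega
    rcases eq_or_lt_of_le hge with h | h
    · rw [← h]
      simp only [if_pos (le_refl i)]
      rw [hvv, show j = t from by omega]
    · simp only [if_neg (by omega : ¬ (t - d ≤ i))]
      congr 1; omega

/-- shortening a walk with a repeated edge -/
lemma shorten_e {E : Finset (Finset V)} {t : ℕ} {w : ℕ → V} {f : ℕ → Finset V}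
    (hw : IsWalk E t w f) {i j : ℕ} (hij : i < j) (hjt : j < t) (hff : f i = f j) :
    ∃ w' f', IsWalk E (t - (j - i)) w' f' ∧ w' 0 = w 0 ∧ w' (t - (j - i)) = w t := by
  set d := j - i with hd
  refine ⟨fun s => if s ≤ i then w s else w (s + d), fun s => if s ≤ i then f s else f (s + d),
    ?_, by simp, ?_⟩
  · intro s hs
    rcases lt_or_ge s i with h | h
    · simpa [Nat.le_of_lt h, show s + 1 ≤ i from h] using hw s (by omega)
    · have h1 : ¬ (s + 1 ≤ i) := by omega
      by_cases h3 : s ≤ i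
      · have hsi : s = i := by omega
        simp only [if_pos h3, if_neg h1]
        have H := hw s (by omega)
        refine ⟨H.1, H.2.1, ?_⟩
        rw [show s + 1 + d = j + 1 from by omega, show f s = f j from by rw [hsi, hff]]
        exact (hw j (by omega)).2.2
      · have hsd : s + d < t := by omega
        have H := hw (s + d) hsd
        simp only [if_neg h3, if_neg h1]
        exact ⟨H.1, H.2.1,
          by rw [show s + 1 + d = s + d + 1 from by omega]; exact H.2.2⟩
  · simp only [if_neg (by omega : ¬ (t - d ≤ i))]
    congr 1; omega


lemma hascycle_mono {E E' : Finset (Finset V)} (h : E ⊆ E') (hc : HasHGCycle E) :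
    HasHGCycle E' := by
  obtain ⟨k, v, e, hk, he, hve, hcl, hvi, hei⟩ := hc
  exact ⟨k, v, e, hk, fun i hi => h (he i hi), hve, hcl, hvi, hei⟩

/-- truncation: a walk in `E` either avoids `e` or reaches a vertex of `e` without it. -/
lemma conn_erase_or {E : Finset (Finset V)} {e : Finset V} {a b : V} (h : Conn E a b) :
    Conn (E.erase e) a b ∨ ∃ w ∈ e, Conn (E.erase e) a w := by
  induction h using Relation.ReflTransGen.head_induction_on with
  | refl => exact Or.inl (conn_refl _)
  | head h' _ ih =>
      obtain ⟨A, hA, ha, hc⟩ := h'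
      by_cases hAe : A = e
      · exact Or.inr ⟨_, hAe ▸ ha, conn_refl _⟩
      · have hstep : HGAdj (E.erase e) _ _ := ⟨A, Finset.mem_erase.2 ⟨hAe, hA⟩, ha, hc⟩
        rcases ih with h | ⟨w, hw, hcw⟩
        · exact Or.inl (Relation.ReflTransGen.head hstep h)
        · exact Or.inr ⟨w, hw, Relation.ReflTransGen.head hstep hcw⟩

/-- In an acyclic hypergraph, two distinct vertices of an edge `e` are not connected
after removing `e`. -/
lemma no_conn_erase {E : Finset (Finset V)} (hE : ¬ HasHGCycle E) {e : Finset V}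
    (he : e ∈ E) {u v : V} (hu : u ∈ e) (hv : v ∈ e) (huv : u ≠ v) :
    ¬ Conn (E.erase e) u v := by
  intro h
  apply hE
  -- minimal length walk
  have hex : ∃ t, ∃ w f, IsWalk (E.erase e) t w f ∧ w 0 = u ∧ w t = v := by
    obtain ⟨t, w, f, hw, h0, ht⟩ := conn_iff_walk.1 h
    exact ⟨t, w, f, hw, h0, ht⟩
  classical
  set t₀ := Nat.find hex with ht₀
  obtain ⟨w, f, hw, h0, ht⟩ := Nat.find_spec hex
  have hmin : ∀ t' < t₀, ¬ ∃ w f, IsWalk (E.erase e) t' w f ∧ w 0 = u ∧ w t' = v :=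
    fun t' ht' => Nat.find_min hex ht'
  have ht1 : 1 ≤ t₀ := by
    by_contra h'
    have h0' : t₀ = 0 := by omega
    apply huv
    rw [← h0, ← ht, ← ht₀, h0']
  have hvinj : ∀ i ≤ t₀, ∀ j ≤ t₀, w i = w j → i = j := by
    intro i hi j hj hvv
    by_contra hne
    rcases Nat.lt_or_ge i j with hij | hij
    · obtain ⟨w', f', hw', h0', ht'⟩ := shorten_v hw hij hj hvv
      exact hmin _ (by omega) ⟨w', f', hw', by rw [h0', h0], by rw [ht', ht]⟩
    · have hij' : j < i := by omega
      obtain ⟨w', f', hw', h0', ht'⟩ := shorten_v hw hij' hi hvv.symm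
      exact hmin _ (by omega) ⟨w', f', hw', by rw [h0', h0], by rw [ht', ht]⟩
  have hfinj : ∀ i < t₀, ∀ j < t₀, f i = f j → i = j := by
    intro i hi j hj hff
    by_contra hne
    rcases Nat.lt_or_ge i j with hij | hij
    · obtain ⟨w', f', hw', h0', ht'⟩ := shorten_e hw hij hj hff
      exact hmin _ (by omega) ⟨w', f', hw', by rw [h0', h0], by rw [ht', ht]⟩
    · have hij' : j < i := by omega
      obtain ⟨w', f', hw', h0', ht'⟩ := shorten_e hw hij' hi hff.symm
      exact hmin _ (by omega) ⟨w', f', hw', by rw [h0', h0], by rw [ht', ht]⟩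
  refine ⟨t₀ + 1, fun s => if s ≤ t₀ then w s else w 0,
    fun s => if s < t₀ then f s else e, by omega, ?_, ?_, ?_, ?_, ?_⟩
  · intro i hi
    by_cases h' : i < t₀
    · simp only [if_pos h']
      exact Finset.mem_of_mem_erase (hw i h').1
    · simp only [if_neg h']; exact he
  · intro i hi
    by_cases h' : i < t₀
    · simp only [if_pos h', if_pos (Nat.le_of_lt h'), if_pos (Nat.succ_le_of_lt h')]
      exact ⟨(hw i h').2.1, (hw i h').2.2⟩
    · have hit : i = t₀ := by omega
      simp only [if_neg h', if_pos (by omega : i ≤ t₀), if_neg (by omega : ¬ i + 1 ≤ t₀)]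
      constructor
      · rw [hit, ht₀, ht]; exact hv
      · rw [h0]; exact hu
  · simp only [if_neg (by omega : ¬ t₀ + 1 ≤ t₀), if_pos (Nat.zero_le t₀)]
  · intro i hi j hj hvv
    simp only [if_pos (by omega : i ≤ t₀), if_pos (by omega : j ≤ t₀)] at hvv
    exact hvinj i (by omega) j (by omega) hvv
  · intro i hi j hj hff
    by_cases h1 : i < t₀ <;> by_cases h2 : j < t₀
    · simp only [if_pos h1, if_pos h2] at hff
      exact hfinj i h1 j h2 hff
    · simp only [if_pos h1, if_neg h2] at hff
      exact absurd hff (Finset.ne_of_mem_erase (hw i h1).1)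
    · simp only [if_neg h1, if_pos h2] at hff
      exact absurd hff.symm (Finset.ne_of_mem_erase (hw j h2).1)
    · omega

/-- Inserting an edge whose vertices are pairwise disconnected keeps acyclicity. -/
lemma acyclic_insert {E' : Finset (Finset V)} (hE' : ¬ HasHGCycle E') {e : Finset V}
    (hsep : ∀ u ∈ e, ∀ v ∈ e, u ≠ v → ¬ Conn E' u v) :
    ¬ HasHGCycle (insert e E') := by
  rintro ⟨k, v, f, hk, hfE, hvf, hcl, hvinj, hfinj⟩
  by_cases huse : ∃ i < k, f i = e
  · obtain ⟨i, hik, hfi⟩ := huse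
    have hstep : ∀ j < k, j ≠ i → HGAdj E' (v j) (v (j + 1)) := by
      intro j hj hji
      have hfj : f j ∈ E' := by
        rcases Finset.mem_insert.1 (hfE j hj) with h | h
        · exact absurd (h.trans hfi.symm) (fun hh => hji (hfinj j hj i hik hh))
        · exact h
      exact ⟨f j, hfj, (hvf j hj).1, (hvf j hj).2⟩
    have hconn1 : Conn E' (v (i + 1)) (v k) :=
      conn_of_steps v (by omega) (fun j hj hj' => hstep j hj' (by omega))
    have hconn2 : Conn E' (v 0) (v i) :=
      conn_of_steps v (Nat.zero_le i) (fun j hj hj' => hstep j (by omega) (by omega))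
    have hconn : Conn E' (v (i + 1)) (v i) :=
      conn_trans (hcl ▸ hconn1) hconn2
    have hne : v (i + 1) ≠ v i := by
      intro hh
      by_cases h' : i + 1 < k
      · exact absurd (hvinj (i+1) h' i hik hh) (by omega)
      · have : i + 1 = k := by omega
        rw [this, hcl] at hh
        exact absurd (hvinj 0 (by omega) i hik hh) (by omega)
    exact hsep _ (hfi ▸ (hvf i hik).2) _ (hfi ▸ (hvf i hik).1) hne hconn
  · push_neg at huse
    exact hE' ⟨k, v, f, hk, fun i hi => by
      rcases Finset.mem_insert.1 (hfE i hi) with h | h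
      · exact absurd h (huse i hi)
      · exact h, hvf, hcl, hvinj, hfinj⟩


def ValidRoot (E : Finset (Finset V)) (ρ : V → V) : Prop :=
  (∀ v, Conn E v (ρ v)) ∧ ∀ u v, Conn E u v → ρ u = ρ v

lemma ValidRoot.idem {E : Finset (Finset V)} {ρ : V → V} (h : ValidRoot E ρ) (v : V) :
    ρ (ρ v) = ρ v := (h.2 v (ρ v) (h.1 v)).symm

lemma validRoot_empty {ρ : V → V} (h : ValidRoot (∅ : Finset (Finset V)) ρ) : ∀ v, ρ v = v :=
  fun v => (conn_empty (h.1 v)).symm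

open Classical in
noncomputable def delRoot (E : Finset (Finset V)) (e : Finset V) (ρ : V → V) : V → V :=
  fun v =>
    if Conn (E.erase e) v (ρ v) then ρ v
    else if h2 : ∃ w, w ∈ e ∧ Conn (E.erase e) v w then h2.choose else v

open Classical in
noncomputable def newRoots (E : Finset (Finset V)) (e : Finset V) (ρ : V → V) : Finset V :=
  e.filter (fun w => ¬ Conn (E.erase e) w (ρ w))

lemma mem_newRoots {E : Finset (Finset V)} {e : Finset V} {ρ : V → V} {w : V} :
    w ∈ newRoots E e ρ ↔ w ∈ e ∧ ¬ Conn (E.erase e) w (ρ w) := by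
  classical
  simp [newRoots]

section Del

variable {E : Finset (Finset V)} {e : Finset V} {ρ : V → V}
variable (hE : ¬ HasHGCycle E) (he : e ∈ E) (hρ : ValidRoot E ρ)

lemma sep (hE : ¬ HasHGCycle E) (he : e ∈ E) :
    ∀ u ∈ e, ∀ v ∈ e, u ≠ v → ¬ Conn (E.erase e) u v :=
  fun u hu v hv huv => no_conn_erase hE he hu hv huv

lemma delRoot_case1 {v : V} (hc : Conn (E.erase e) v (ρ v)) : delRoot E e ρ v = ρ v := by
  classical
  simp only [delRoot]
  rw [if_pos hc]

lemma delRoot_case2 (hρ : ValidRoot E ρ) {v : V} (hc : ¬ Conn (E.erase e) v (ρ v)) :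
    delRoot E e ρ v ∈ e ∧ Conn (E.erase e) v (delRoot E e ρ v) := by
  classical
  have hex : ∃ w, w ∈ e ∧ Conn (E.erase e) v w := by
    rcases conn_erase_or (hρ.1 v) with h | ⟨w, hw, hcw⟩
    · exact absurd h hc
    · exact ⟨w, hw, hcw⟩
  simp only [delRoot]
  rw [if_neg hc, dif_pos hex]
  exact hex.choose_spec

lemma delRoot_conn (hρ : ValidRoot E ρ) (v : V) : Conn (E.erase e) v (delRoot E e ρ v) := by
  by_cases hc : Conn (E.erase e) v (ρ v)
  · rw [delRoot_case1 hc]; exact hc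
  · exact (delRoot_case2 hρ hc).2

lemma delRoot_valid (hE : ¬ HasHGCycle E) (he : e ∈ E) (hρ : ValidRoot E ρ) : ValidRoot (E.erase e) (delRoot E e ρ) := by
  refine ⟨delRoot_conn hρ, ?_⟩
  intro u v huv
  by_cases hcu : Conn (E.erase e) u (ρ u)
  · have hρuv : ρ v = ρ u := hρ.2 v u (conn_mono (Finset.erase_subset e E) (conn_symm huv))
    have hcv : Conn (E.erase e) v (ρ v) := by
      rw [hρuv]; exact conn_trans (conn_symm huv) hcu
    rw [delRoot_case1 hcu, delRoot_case1 hcv, hρuv]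
  · have hcv : ¬ Conn (E.erase e) v (ρ v) := by
      intro hcv
      apply hcu
      have hρuv : ρ u = ρ v := hρ.2 u v (conn_mono (Finset.erase_subset e E) huv)
      rw [hρuv]; exact conn_trans huv hcv
    obtain ⟨hdu, hcu'⟩ := delRoot_case2 hρ hcu
    obtain ⟨hdv, hcv'⟩ := delRoot_case2 hρ hcv
    by_contra hne
    exact sep hE he _ hdu _ hdv hne
      (conn_trans (conn_symm hcu') (conn_trans huv hcv'))

lemma exists_unique_old (hE : ¬ HasHGCycle E) (he : e ∈ E) (hρ : ValidRoot E ρ) (he' : e.Nonempty) :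
    ∃! x, x ∈ e ∧ Conn (E.erase e) x (ρ x) := by
  obtain ⟨u, hu⟩ := he'
  have hex : ∃ x, x ∈ e ∧ Conn (E.erase e) x (ρ x) := by
    rcases conn_erase_or (conn_symm (hρ.1 u)) with h | ⟨w, hw, hcw⟩
    · exact ⟨u, hu, conn_symm h⟩
    · refine ⟨w, hw, ?_⟩
      have : ρ w = ρ u := hρ.2 w u (conn_of_mem_edge he hw hu)
      rw [this]; exact conn_symm hcw
  obtain ⟨x, hx⟩ := hex
  refine ⟨x, hx, ?_⟩
  intro y hy
  by_contra hne
  have hρxy : ρ y = ρ x := hρ.2 y x (conn_of_mem_edge he hy.1 hx.1)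
  exact sep hE he y hy.1 x hx.1 hne
    (conn_trans hy.2 (by rw [hρxy]; exact conn_symm hx.2))

lemma card_newRoots (hE : ¬ HasHGCycle E) (he : e ∈ E) (hρ : ValidRoot E ρ) (he' : e.Nonempty) : (newRoots E e ρ).card = e.card - 1 := by
  classical
  obtain ⟨x, hx, hxu⟩ := exists_unique_old hE he hρ he'
  have hfilter : e.filter (fun w => Conn (E.erase e) w (ρ w)) = {x} := by
    ext w
    simp only [Finset.mem_filter, Finset.mem_singleton]
    constructor
    · intro hw; exact hxu w hw
    · rintro rfl; exact hx
  have hsum := Finset.card_filter_add_card_filter_not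
    (s := e) (p := fun w => Conn (E.erase e) w (ρ w))
  rw [hfilter] at hsum
  simp only [Finset.card_singleton] at hsum
  have : (newRoots E e ρ).card = (e.filter (fun w => ¬ Conn (E.erase e) w (ρ w))).card := by
    classical
    simp [newRoots]
  omega

variable [Fintype V]

lemma image_delRoot (hE : ¬ HasHGCycle E) (he : e ∈ E) (hρ : ValidRoot E ρ) :
    Finset.image (delRoot E e ρ) Finset.univ = Finset.image ρ Finset.univ ∪ newRoots E e ρ := by
  ext y
  simp only [Finset.mem_union, Finset.mem_image, Finset.mem_univ, true_and]
  constructor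
  · rintro ⟨v, rfl⟩
    by_cases hc : Conn (E.erase e) v (ρ v)
    · exact Or.inl ⟨v, (delRoot_case1 hc).symm⟩
    · obtain ⟨hd, hcd⟩ := delRoot_case2 hρ hc
      refine Or.inr (mem_newRoots.2 ⟨hd, ?_⟩)
      intro hcc
      apply hc
      have : ρ (delRoot E e ρ v) = ρ v :=
        hρ.2 _ _ (conn_mono (Finset.erase_subset e E) (conn_symm hcd))
      rw [this] at hcc
      exact conn_trans hcd hcc
  · rintro (⟨u, rfl⟩ | hy)
    · refine ⟨ρ u, ?_⟩
      rw [delRoot_case1 (by rw [hρ.idem]; exact conn_refl _), hρ.idem]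
    · obtain ⟨hye, hyc⟩ := mem_newRoots.1 hy
      refine ⟨y, ?_⟩
      obtain ⟨hd, hcd⟩ := delRoot_case2 hρ hyc
      by_contra hne
      exact sep hE he y hye _ hd (fun hh => hne hh.symm) hcd

lemma disjoint_image_newRoots (hρ : ValidRoot E ρ) :
    Disjoint (Finset.image ρ Finset.univ) (newRoots E e ρ) := by
  rw [Finset.disjoint_left]
  rintro w hw hwN
  obtain ⟨u, -, rfl⟩ := Finset.mem_image.1 hw
  exact (mem_newRoots.1 hwN).2 (by rw [hρ.idem]; exact conn_refl _)

lemma card_image_delRoot (hE : ¬ HasHGCycle E) (he : e ∈ E) (hρ : ValidRoot E ρ) (he' : e.Nonempty) :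
    (Finset.image (delRoot E e ρ) Finset.univ).card
      = (Finset.image ρ Finset.univ).card + (e.card - 1) := by
  rw [image_delRoot hE he hρ, Finset.card_union_of_disjoint (disjoint_image_newRoots hρ),
    card_newRoots hE he hρ he']

end Del

/-- The number of components (root images) of a `k`-uniform acyclic hypergraph. -/
lemma card_image_root [Fintype V] {k : ℕ} (hk : 2 ≤ k) :
    ∀ (m : ℕ) (E : Finset (Finset V)) (ρ : V → V), E.card = m →
      (∀ A ∈ E, A.card = k) → ¬ HasHGCycle E → ValidRoot E ρ →
      (Finset.image ρ Finset.univ).card + (k - 1) * m = Fintype.card V := by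
  intro m
  induction m with
  | zero =>
      intro E ρ hcard hunif hac hρ
      rw [Finset.card_eq_zero] at hcard
      subst hcard
      have hid : ∀ v, ρ v = v := validRoot_empty hρ
      have : Finset.image ρ Finset.univ = Finset.univ := by
        ext v
        simp only [Finset.mem_image, Finset.mem_univ, true_and, iff_true]
        exact ⟨v, hid v⟩
      rw [this]
      simp [Finset.card_univ]
  | succ m ih =>
      intro E ρ hcard hunif hac hρ
      have hne : E.Nonempty := Finset.card_pos.1 (by omega)
      obtain ⟨e, he⟩ := hne
      have hene : e.Nonempty := Finset.card_pos.1 (by rw [hunif e he]; omega)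
      have h1 := ih (E.erase e) (delRoot E e ρ) (by rw [Finset.card_erase_of_mem he, hcard]; rfl)
        (fun A hA => hunif A (Finset.mem_of_mem_erase hA))
        (fun hc => hac (hascycle_mono (Finset.erase_subset e E) hc))
        (delRoot_valid hac he hρ)
      have h2 := card_image_delRoot hac he hρ hene
      rw [hunif e he] at h2
      rw [h2] at h1
      have hk1 : (k - 1) * (m + 1) = (k - 1) * m + (k - 1) := by ring
      omega


section Nonempty

variable [Nonempty V]

open Classical in
noncomputable def oldVtx (E : Finset (Finset V)) (e : Finset V) (ρ : V → V) : V :=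
  if h : ∃ x, x ∈ e ∧ Conn (E.erase e) x (ρ x) then h.choose else Classical.arbitrary V

lemma oldVtx_spec {E : Finset (Finset V)} {e : Finset V} {ρ : V → V}
    (hE : ¬ HasHGCycle E) (he : e ∈ E) (hρ : ValidRoot E ρ) (he' : e.Nonempty) :
    oldVtx E e ρ ∈ e ∧ Conn (E.erase e) (oldVtx E e ρ) (ρ (oldVtx E e ρ)) ∧
      ∀ y ∈ e, Conn (E.erase e) y (ρ y) → y = oldVtx E e ρ := by
  classical
  obtain ⟨x, hx, hxu⟩ := exists_unique_old hE he hρ he'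
  have hex : ∃ x, x ∈ e ∧ Conn (E.erase e) x (ρ x) := ⟨x, hx⟩
  have hov : oldVtx E e ρ = hex.choose := by rw [oldVtx, dif_pos hex]
  have hspec := hex.choose_spec
  rw [← hov] at hspec
  exact ⟨hspec.1, hspec.2, fun y hy hyc => by
    rw [hxu y ⟨hy, hyc⟩, hxu _ ⟨hspec.1, hspec.2⟩]⟩

end Nonempty

open Classical in
noncomputable def addRoot (E : Finset (Finset V)) (ρ' : V → V) (x : V) : V → V :=
  fun v => if Conn E v x then ρ' x else ρ' v

lemma addRoot_pos {E : Finset (Finset V)} {ρ' : V → V} {x v : V} (h : Conn E v x) :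
    addRoot E ρ' x v = ρ' x := by classical rw [addRoot, if_pos h]

lemma addRoot_neg {E : Finset (Finset V)} {ρ' : V → V} {x v : V} (h : ¬ Conn E v x) :
    addRoot E ρ' x v = ρ' v := by classical rw [addRoot, if_neg h]

lemma root_fix [Fintype V] {E : Finset (Finset V)} {ρ : V → V} (hρ : ValidRoot E ρ) {w : V}
    (hw : w ∈ Finset.image ρ Finset.univ) : ρ w = w := by
  obtain ⟨u, -, rfl⟩ := Finset.mem_image.1 hw
  exact hρ.idem u

section Bwd

variable [Fintype V]
variable {k : ℕ} {E' : Finset (Finset V)} {ρ' : V → V} {x : V} {S : Finset V}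

/-- hypotheses for the backward construction -/
structure BwdH (k : ℕ) (E' : Finset (Finset V)) (ρ' : V → V) (x : V) (S : Finset V) : Prop where
  hk : 2 ≤ k
  hval : ValidRoot E' ρ'
  hsub : S ⊆ (Finset.image ρ' Finset.univ).erase (ρ' x)
  hcard : S.card = k - 1

namespace BwdH

variable (H : BwdH k E' ρ' x S)
include H

lemma hxS : x ∉ S := by
  intro hx
  have h1 := Finset.mem_of_mem_erase (H.hsub hx)
  have h2 := Finset.ne_of_mem_erase (H.hsub hx)
  exact h2 (root_fix H.hval h1).symm

lemma fixS {w : V} (hw : w ∈ S) : ρ' w = w := root_fix H.hval (Finset.mem_of_mem_erase (H.hsub hw))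

lemma ecard : (insert x S).card = k := by
  rw [Finset.card_insert_of_notMem H.hxS, H.hcard]
  have := H.hk
  omega

lemma hsep : ∀ u ∈ insert x S, ∀ v ∈ insert x S, u ≠ v → ¬ Conn E' u v := by
  intro u hu v hv huv hconn
  rcases Finset.mem_insert.1 hu with rfl | hu' <;> rcases Finset.mem_insert.1 hv with rfl | hv'
  · exact huv rfl
  · exact Finset.ne_of_mem_erase (H.hsub hv') ((H.fixS hv') ▸ (H.hval.2 _ _ hconn)).symm
  · exact Finset.ne_of_mem_erase (H.hsub hu') ((H.fixS hu') ▸ (H.hval.2 _ _ (conn_symm hconn))).symm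
  · apply huv
    rw [← H.fixS hu', ← H.fixS hv', H.hval.2 _ _ hconn]

lemma Snonempty : S.Nonempty := by
  apply Finset.card_pos.1
  have h1 := H.hcard
  have h2 := H.hk
  omega

lemma heE' : insert x S ∉ E' := by
  intro hmem
  obtain ⟨s, hs⟩ := H.Snonempty
  have hxs : x ≠ s := fun h => H.hxS (h ▸ hs)
  exact H.hsep x (Finset.mem_insert_self x S) s (Finset.mem_insert_of_mem hs) hxs
    (conn_of_mem_edge hmem (Finset.mem_insert_self x S) (Finset.mem_insert_of_mem hs))

lemma hacyclic (hE' : ¬ HasHGCycle E') : ¬ HasHGCycle (insert (insert x S) E') :=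
  acyclic_insert hE' H.hsep

lemma herase : (insert (insert x S) E').erase (insert x S) = E' :=
  Finset.erase_insert H.heE'

lemma hconn_down {u v : V} (hc : Conn (insert (insert x S) E') u v)
    (hux : ¬ Conn (insert (insert x S) E') u x) : Conn E' u v := by
  rcases conn_erase_or (e := insert x S) hc with h | ⟨w, hw, hcw⟩
  · rwa [H.herase] at h
  · exfalso
    apply hux
    rw [H.herase] at hcw
    refine conn_trans (conn_mono (Finset.subset_insert _ _) hcw) ?_
    exact conn_of_mem_edge (Finset.mem_insert_self _ _) hw (Finset.mem_insert_self x S)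

lemma hvalid : ValidRoot (insert (insert x S) E')
    (addRoot (insert (insert x S) E') ρ' x) := by
  set E := insert (insert x S) E' with hEdef
  have hE'sub : E' ⊆ E := Finset.subset_insert _ _
  constructor
  · intro v
    by_cases h : Conn E v x
    · rw [addRoot_pos h]
      exact conn_trans h (conn_mono hE'sub (H.hval.1 x))
    · rw [addRoot_neg h]
      exact conn_mono hE'sub (H.hval.1 v)
  · intro u v huv
    by_cases h : Conn E u x
    · have h2 : Conn E v x := conn_trans (conn_symm huv) h
      rw [addRoot_pos h, addRoot_pos h2]
    · have h2 : ¬ Conn E v x := fun hh => h (conn_trans huv hh)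
      rw [addRoot_neg h, addRoot_neg h2]
      exact H.hval.2 _ _ (H.hconn_down huv h)

end BwdH

end Bwd


abbrev RF (V : Type) [DecidableEq V] (k m : ℕ) : Type :=
  {p : Finset (Finset V) × (V → V) //
    (∀ A ∈ p.1, A.card = k) ∧ ¬ HasHGCycle p.1 ∧ p.1.card = m ∧ ValidRoot p.1 p.2}

abbrev Aset (V : Type) [DecidableEq V] (k m : ℕ) : Type :=
  {q : RF V k m × Finset V // q.2 ∈ q.1.1.1}

abbrev Bset (V : Type) [DecidableEq V] [Fintype V] (k m : ℕ) : Type :=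
  {q : RF V k m × (V × Finset V) //
    q.2.2 ⊆ (Finset.image q.1.1.2 Finset.univ).erase (q.1.1.2 q.2.1) ∧ q.2.2.card = k - 1}

section Maps

variable [Fintype V] [Nonempty V] {k m : ℕ}

-- component lemmas for the forward direction
lemma insert_oldVtx_newRoots {E : Finset (Finset V)} {e : Finset V} {ρ : V → V}
    (hE : ¬ HasHGCycle E) (he : e ∈ E) (hρ : ValidRoot E ρ) (he' : e.Nonempty) :
    insert (oldVtx E e ρ) (newRoots E e ρ) = e := by
  obtain ⟨hov, hoc, hou⟩ := oldVtx_spec hE he hρ he'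
  ext w
  simp only [Finset.mem_insert, mem_newRoots]
  constructor
  · rintro (rfl | ⟨h, -⟩)
    · exact hov
    · exact h
  · intro hw
    by_cases hc : Conn (E.erase e) w (ρ w)
    · exact Or.inl (hou w hw hc)
    · exact Or.inr ⟨hw, hc⟩

lemma addRoot_delRoot {E : Finset (Finset V)} {e : Finset V} {ρ : V → V}
    (hE : ¬ HasHGCycle E) (he : e ∈ E) (hρ : ValidRoot E ρ) (he' : e.Nonempty) :
    addRoot E (delRoot E e ρ) (oldVtx E e ρ) = ρ := by
  obtain ⟨hov, hoc, hou⟩ := oldVtx_spec hE he hρ he'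
  funext v
  have hρ'x : delRoot E e ρ (oldVtx E e ρ) = ρ (oldVtx E e ρ) := delRoot_case1 hoc
  by_cases h : Conn E v (oldVtx E e ρ)
  · rw [addRoot_pos h, hρ'x]
    exact (hρ.2 v _ h).symm
  · rw [addRoot_neg h]
    apply delRoot_case1
    by_contra hc
    obtain ⟨hd, hcd⟩ := delRoot_case2 hρ hc
    exact h (conn_trans (conn_mono (Finset.erase_subset e E) hcd)
      (conn_of_mem_edge he hd hov))

lemma fwdA_prop (hk : 2 ≤ k) (a : Aset V k (m + 1)) :
    (∀ A ∈ a.1.1.1.1.erase a.1.2, A.card = k) ∧ ¬ HasHGCycle (a.1.1.1.1.erase a.1.2) ∧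
      (a.1.1.1.1.erase a.1.2).card = m ∧
      ValidRoot (a.1.1.1.1.erase a.1.2) (delRoot a.1.1.1.1 a.1.2 a.1.1.1.2) := by
  obtain ⟨⟨⟨⟨E, ρ⟩, hunif, hac, hcard, hval⟩, e⟩, he⟩ := a
  refine ⟨fun A hA => hunif A (Finset.mem_of_mem_erase hA),
    fun hc => hac (hascycle_mono (Finset.erase_subset e E) hc),
    by rw [Finset.card_erase_of_mem he, hcard]; rfl,
    delRoot_valid hac he hval⟩

lemma fwdA_prop2 (hk : 2 ≤ k) (a : Aset V k (m + 1)) :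
    newRoots a.1.1.1.1 a.1.2 a.1.1.1.2 ⊆
      (Finset.image (delRoot a.1.1.1.1 a.1.2 a.1.1.1.2) Finset.univ).erase
        (delRoot a.1.1.1.1 a.1.2 a.1.1.1.2 (oldVtx a.1.1.1.1 a.1.2 a.1.1.1.2)) ∧
      (newRoots a.1.1.1.1 a.1.2 a.1.1.1.2).card = k - 1 := by
  obtain ⟨⟨⟨⟨E, ρ⟩, hunif, hac, hcard, hval⟩, e⟩, he⟩ := a
  have he' : e.Nonempty := Finset.card_pos.1 (by rw [hunif e he]; omega)
  obtain ⟨hov, hoc, hou⟩ := oldVtx_spec hac he hval he'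
  constructor
  · intro w hw
    rw [Finset.mem_erase]
    constructor
    · intro hww
      have h1 : w ∈ Finset.image ρ Finset.univ := by
        rw [hww, delRoot_case1 hoc]
        exact Finset.mem_image_of_mem ρ (Finset.mem_univ _)
      exact (Finset.disjoint_left.1 (disjoint_image_newRoots hval)) h1 hw
    · rw [image_delRoot hac he hval]
      exact Finset.mem_union_right _ hw
  · rw [card_newRoots hac he hval he', hunif e he]

noncomputable def fwdA (hk : 2 ≤ k) (a : Aset V k (m + 1)) : Bset V k m :=
  ⟨⟨⟨(a.1.1.1.1.erase a.1.2, delRoot a.1.1.1.1 a.1.2 a.1.1.1.2), fwdA_prop hk a⟩,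
    (oldVtx a.1.1.1.1 a.1.2 a.1.1.1.2, newRoots a.1.1.1.1 a.1.2 a.1.1.1.2)⟩,
    fwdA_prop2 hk a⟩

lemma bwdA_prop (hk : 2 ≤ k) (b : Bset V k m) :
    (∀ A ∈ insert (insert b.1.2.1 b.1.2.2) b.1.1.1.1, A.card = k) ∧
      ¬ HasHGCycle (insert (insert b.1.2.1 b.1.2.2) b.1.1.1.1) ∧
      (insert (insert b.1.2.1 b.1.2.2) b.1.1.1.1).card = m + 1 ∧
      ValidRoot (insert (insert b.1.2.1 b.1.2.2) b.1.1.1.1)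
        (addRoot (insert (insert b.1.2.1 b.1.2.2) b.1.1.1.1) b.1.1.1.2 b.1.2.1) := by
  obtain ⟨⟨⟨⟨E', ρ'⟩, hunif, hac, hcard, hval⟩, x, S⟩, hsub, hScard⟩ := b
  have H : BwdH k E' ρ' x S := ⟨hk, hval, hsub, hScard⟩
  refine ⟨?_, H.hacyclic hac, ?_, H.hvalid⟩
  · intro A hA
    rcases Finset.mem_insert.1 hA with rfl | hA'
    · exact H.ecard
    · exact hunif A hA'
  · rw [Finset.card_insert_of_notMem H.heE', hcard]

noncomputable def bwdA (hk : 2 ≤ k) (b : Bset V k m) : Aset V k (m + 1) :=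
  ⟨⟨⟨(insert (insert b.1.2.1 b.1.2.2) b.1.1.1.1,
      addRoot (insert (insert b.1.2.1 b.1.2.2) b.1.1.1.1) b.1.1.1.2 b.1.2.1),
      bwdA_prop hk b⟩, insert b.1.2.1 b.1.2.2⟩,
    Finset.mem_insert_self _ _⟩

lemma bwd_fwd (hk : 2 ≤ k) (a : Aset V k (m + 1)) : bwdA hk (fwdA hk a) = a := by
  obtain ⟨⟨⟨⟨E, ρ⟩, hunif, hac, hcard, hval⟩, e⟩, he⟩ := a
  have he' : e.Nonempty := Finset.card_pos.1 (by rw [hunif e he]; omega)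
  have h1 : insert (oldVtx E e ρ) (newRoots E e ρ) = e :=
    insert_oldVtx_newRoots hac he hval he'
  apply Subtype.ext
  apply Prod.ext
  · apply Subtype.ext
    apply Prod.ext
    · show insert (insert (oldVtx E e ρ) (newRoots E e ρ)) (E.erase e) = E
      rw [h1, Finset.insert_erase he]
    · show addRoot (insert (insert (oldVtx E e ρ) (newRoots E e ρ)) (E.erase e))
        (delRoot E e ρ) (oldVtx E e ρ) = ρ
      rw [h1, Finset.insert_erase he]
      exact addRoot_delRoot hac he hval he'
  · exact h1

lemma fwd_bwd (hk : 2 ≤ k) (b : Bset V k m) : fwdA hk (bwdA hk b) = b := by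
  obtain ⟨⟨⟨⟨E', ρ'⟩, hunif, hac, hcard, hval⟩, x, S⟩, hsub, hScard⟩ := b
  have H : BwdH k E' ρ' x S := ⟨hk, hval, hsub, hScard⟩
  set e := insert x S with hedef
  set E := insert e E' with hEdef
  set ρ := addRoot E ρ' x with hρdef
  have hEe : E.erase e = E' := H.herase
  have heE : e ∈ E := Finset.mem_insert_self _ _
  have hacE : ¬ HasHGCycle E := H.hacyclic hac
  have hvalE : ValidRoot E ρ := H.hvalid
  have he' : e.Nonempty := ⟨x, Finset.mem_insert_self _ _⟩
  have hρx : ρ x = ρ' x := addRoot_pos (conn_refl x)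
  -- delRoot recovers ρ'
  have hdel : delRoot E e ρ = ρ' := by
    funext v
    by_cases h1 : Conn E' v (ρ v)
    · rw [delRoot_case1 (by rw [hEe]; exact h1)]
      by_cases h2 : Conn E v x
      · rw [show ρ v = ρ' x from addRoot_pos h2]
        have h1' : Conn E' v (ρ' x) := by
          rw [show ρ v = ρ' x from addRoot_pos h2] at h1; exact h1
        exact ((hval.2 v _ h1').trans (hval.idem x)).symm
      · exact (show ρ v = ρ' v from addRoot_neg h2)
    · have h2 : Conn E v x := by
        by_contra h2
        rw [show ρ v = ρ' v from addRoot_neg h2] at h1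
        exact h1 (hval.1 v)
      have h1' : ¬ Conn E' v (ρ' x) := by
        rw [show ρ v = ρ' x from addRoot_pos h2] at h1; exact h1
      obtain ⟨hd, hcd⟩ := delRoot_case2 hvalE (v := v) (by rw [hEe]; exact h1)
      rw [hEe] at hcd
      rcases Finset.mem_insert.1 hd with hdx | hdS
      · exact absurd (conn_trans (hdx ▸ hcd) (hval.1 x)) h1'
      · exact ((hval.2 v _ hcd).trans (H.fixS hdS)).symm
  -- oldVtx recovers x
  have hold : oldVtx E e ρ = x := by
    obtain ⟨hov, hoc, hou⟩ := oldVtx_spec hacE heE hvalE he'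
    exact (hou x (Finset.mem_insert_self _ _)
      (by rw [hEe, hρx]; exact hval.1 x)).symm
  -- newRoots recovers S
  have hnew : newRoots E e ρ = S := by
    ext w
    rw [mem_newRoots, hEe]
    constructor
    · rintro ⟨hwe, hnc⟩
      rcases Finset.mem_insert.1 hwe with rfl | hwS
      · exact absurd (by rw [hρx]; exact hval.1 w) hnc
      · exact hwS
    · intro hwS
      refine ⟨Finset.mem_insert_of_mem hwS, ?_⟩
      have hwx : Conn E w x :=
        conn_of_mem_edge heE (Finset.mem_insert_of_mem hwS) (Finset.mem_insert_self _ _)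
      rw [show ρ w = ρ' x from addRoot_pos hwx]
      intro hcw
      have : ρ' w = ρ' x := (hval.2 w _ hcw).trans (hval.idem x)
      rw [H.fixS hwS] at this
      exact Finset.ne_of_mem_erase (hsub hwS) this
  apply Subtype.ext
  apply Prod.ext
  · apply Subtype.ext
    apply Prod.ext
    · exact hEe
    · show delRoot E e ρ = ρ'
      exact hdel
  · show (oldVtx E e ρ, newRoots E e ρ) = (x, S)
    rw [hold, hnew]

lemma card_step (hk : 2 ≤ k) (m : ℕ) :
    Nat.card (Aset V k (m + 1)) = Nat.card (Bset V k m) :=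
  Nat.card_congr ⟨fwdA hk, bwdA hk, bwd_fwd hk, fwd_bwd hk⟩

end Maps


section Count

variable [Fintype V] {k m : ℕ}

lemma card_Aset (m : ℕ) : Nat.card (Aset V k m) = Nat.card (RF V k m) * m := by
  classical
  have e1 : Aset V k m ≃ Σ F : RF V k m, {e : Finset V // e ∈ F.1.1} :=
    { toFun := fun a => ⟨a.1.1, a.1.2, a.2⟩
      invFun := fun s => ⟨(s.1, s.2.1), s.2.2⟩
      left_inv := fun a => rfl
      right_inv := fun s => rfl }
  rw [Nat.card_congr e1]
  letI : Fintype (RF V k m) := Fintype.ofFinite _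
  rw [Nat.card_eq_fintype_card, Fintype.card_sigma]
  have hfib : ∀ F : RF V k m, Fintype.card {e : Finset V // e ∈ F.1.1} = m := by
    intro F
    rw [← Nat.card_eq_fintype_card, Nat.card_eq_finsetCard, F.2.2.2.1]
  rw [Finset.sum_congr rfl (fun F _ => hfib F), Finset.sum_const, smul_eq_mul,
    Nat.card_eq_fintype_card, Finset.card_univ]

lemma card_fiberB (hk : 2 ≤ k) (F : RF V k m) (x : V) :
    Nat.card {S : Finset V //
        S ⊆ (Finset.image F.1.2 Finset.univ).erase (F.1.2 x) ∧ S.card = k - 1}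
      = (Fintype.card V - (k - 1) * m - 1).choose (k - 1) := by
  classical
  have hc := card_image_root hk m F.1.1 F.1.2 F.2.2.2.1 F.2.1 F.2.2.1 F.2.2.2.2
  have hmem : F.1.2 x ∈ Finset.image F.1.2 Finset.univ :=
    Finset.mem_image_of_mem _ (Finset.mem_univ x)
  have ht : ((Finset.image F.1.2 Finset.univ).erase (F.1.2 x)).card
      = Fintype.card V - (k - 1) * m - 1 := by
    rw [Finset.card_erase_of_mem hmem]
    omega
  have e2 : {S : Finset V //
        S ⊆ (Finset.image F.1.2 Finset.univ).erase (F.1.2 x) ∧ S.card = k - 1}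
      ≃ {S : Finset V //
        S ∈ ((Finset.image F.1.2 Finset.univ).erase (F.1.2 x)).powersetCard (k - 1)} :=
    Equiv.subtypeEquivRight (fun S => (Finset.mem_powersetCard).symm)
  rw [Nat.card_congr e2, Nat.card_eq_finsetCard, Finset.card_powersetCard, ht]

lemma card_Bset (hk : 2 ≤ k) (m : ℕ) :
    Nat.card (Bset V k m) = Nat.card (RF V k m) *
      (Fintype.card V * (Fintype.card V - (k - 1) * m - 1).choose (k - 1)) := by
  classical
  have e1 : Bset V k m ≃ Σ F : RF V k m, Σ x : V, {S : Finset V //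
      S ⊆ (Finset.image F.1.2 Finset.univ).erase (F.1.2 x) ∧ S.card = k - 1} :=
    { toFun := fun b => ⟨b.1.1, b.1.2.1, b.1.2.2, b.2⟩
      invFun := fun s => ⟨(s.1, (s.2.1, s.2.2.1)), s.2.2.2⟩
      left_inv := fun b => rfl
      right_inv := fun s => rfl }
  rw [Nat.card_congr e1]
  letI : Fintype (RF V k m) := Fintype.ofFinite _
  letI : ∀ (F : RF V k m) (x : V), Fintype {S : Finset V //
      S ⊆ (Finset.image F.1.2 Finset.univ).erase (F.1.2 x) ∧ S.card = k - 1} :=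
    fun F x => Fintype.ofFinite _
  rw [Nat.card_eq_fintype_card, Fintype.card_sigma]
  have hfib : ∀ F : RF V k m,
      Fintype.card (Σ x : V, {S : Finset V //
        S ⊆ (Finset.image F.1.2 Finset.univ).erase (F.1.2 x) ∧ S.card = k - 1})
      = Fintype.card V * (Fintype.card V - (k - 1) * m - 1).choose (k - 1) := by
    intro F
    rw [Fintype.card_sigma]
    have : ∀ x : V, Fintype.card {S : Finset V //
        S ⊆ (Finset.image F.1.2 Finset.univ).erase (F.1.2 x) ∧ S.card = k - 1}
        = (Fintype.card V - (k - 1) * m - 1).choose (k - 1) := by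
      intro x
      rw [← Nat.card_eq_fintype_card, card_fiberB hk F x]
    rw [Finset.sum_congr rfl (fun x _ => this x), Finset.sum_const, smul_eq_mul,
      Finset.card_univ]
  rw [Finset.sum_congr rfl (fun F _ => hfib F), Finset.sum_const, smul_eq_mul,
    Nat.card_eq_fintype_card, Finset.card_univ]

lemma card_RF_zero (hk : 2 ≤ k) : Nat.card (RF V k 0) = 1 := by
  rw [Nat.card_eq_one_iff_unique]
  constructor
  · constructor
    intro F G
    apply Subtype.ext
    apply Prod.ext
    · rw [Finset.card_eq_zero.1 F.2.2.2.1, Finset.card_eq_zero.1 G.2.2.2.1]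
    · funext v
      have h1 : F.1.1 = ∅ := Finset.card_eq_zero.1 F.2.2.2.1
      have h2 : G.1.1 = ∅ := Finset.card_eq_zero.1 G.2.2.2.1
      have hF := validRoot_empty (show ValidRoot ∅ F.1.2 by rw [← h1]; exact F.2.2.2.2)
      have hG := validRoot_empty (show ValidRoot ∅ G.1.2 by rw [← h2]; exact G.2.2.2.2)
      rw [hF v, hG v]
  · refine ⟨⟨(∅, id), fun A hA => absurd hA (Finset.notMem_empty A), ?_, Finset.card_empty, ?_⟩⟩
    · rintro ⟨k', v, f, hk', hfE, -⟩
      exact absurd (hfE 0 (by omega)) (Finset.notMem_empty _)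
    · exact ⟨fun v => conn_refl v, fun u v h => by rw [conn_empty h]⟩

lemma main_count (hk : 2 ≤ k) :
    ∀ m, (k - 1) * m < Fintype.card V →
      Nat.card (RF V k m) * (m.factorial * ((k - 1).factorial) ^ m *
          (Fintype.card V - 1 - m * (k - 1)).factorial)
        = (Fintype.card V) ^ m * (Fintype.card V - 1).factorial := by
  intro m
  induction m with
  | zero =>
      intro _
      rw [card_RF_zero hk]
      simp
  | succ m ih =>
      intro hlt
      have hexp : (k - 1) * (m + 1) = (k - 1) * m + (k - 1) := by ring
      have hm : (k - 1) * m < Fintype.card V := by omega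
      haveI : Nonempty V := Fintype.card_pos_iff.mp (by omega)
      have IH := ih hm
      set n := Fintype.card V with hn
      set A := Nat.card (RF V k (m + 1)) with hA
      set B := Nat.card (RF V k m) with hB
      set C := (n - (k - 1) * m - 1).choose (k - 1) with hC
      have key : A * (m + 1) = B * (n * C) := by
        rw [hA, hB, hC, hn, ← card_Aset (m + 1), ← card_Bset hk m, card_step hk m]
      set c1 := n - (k - 1) * m - 1 with hc1
      have hkc : k - 1 ≤ c1 := by omega
      have hch := Nat.choose_mul_factorial_mul_factorial hkc
      have hd : n - 1 - (m + 1) * (k - 1) = c1 - (k - 1) := by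
        have h1 : (m + 1) * (k - 1) = m * (k - 1) + (k - 1) := by ring
        have h2 : (k - 1) * m = m * (k - 1) := Nat.mul_comm _ _
        omega
      have hc1' : n - 1 - m * (k - 1) = c1 := by
        have h2 : (k - 1) * m = m * (k - 1) := Nat.mul_comm _ _
        omega
      rw [hc1'] at IH
      rw [hd, Nat.factorial_succ, pow_succ]
      set b := (k - 1).factorial with hb
      calc A * ((m + 1) * m.factorial * (b ^ m * b) * (c1 - (k - 1)).factorial)
          = (A * (m + 1)) * (m.factorial * b ^ m * (b * (c1 - (k - 1)).factorial)) := by ring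
        _ = B * (n * C) * (m.factorial * b ^ m * (b * (c1 - (k - 1)).factorial)) := by rw [key]
        _ = (B * (m.factorial * b ^ m * (C * b * (c1 - (k - 1)).factorial))) * n := by ring
        _ = (B * (m.factorial * b ^ m * c1.factorial)) * n := by rw [hch]
        _ = n ^ m * (n - 1).factorial * n := by rw [← IH]
        _ = n ^ (m + 1) * (n - 1).factorial := by ring

end Count


section Quoting

lemma eqvgen_iff_conn {E : Finset (Finset V)} {a b : V} :
    Relation.EqvGen (HGAdj E) a b ↔ Conn E a b := by
  constructor
  · intro h
    induction h with
    | rel _ _ h => exact adj_conn h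
    | refl _ => exact conn_refl _
    | symm _ _ _ ih => exact conn_symm ih
    | trans _ _ _ _ _ ih1 ih2 => exact conn_trans ih1 ih2
  · intro h
    induction h with
    | refl => exact Relation.EqvGen.refl _
    | tail _ h2 ih => exact Relation.EqvGen.trans _ _ _ ih (Relation.EqvGen.rel _ _ h2)

lemma mk_eq_iff {E : Finset (Finset V)} {a b : V} :
    Quot.mk (HGAdj E) a = Quot.mk (HGAdj E) b ↔ Conn E a b :=
  ⟨fun h => eqvgen_iff_conn.1 (Quot.eqvGen_exact h),
   fun h => Quot.eqvGen_sound (eqvgen_iff_conn.2 h)⟩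

lemma card_quot [Fintype V] {E : Finset (Finset V)} {ρ : V → V} (hρ : ValidRoot E ρ) :
    Nat.card (Quot (HGAdj E)) = (Finset.image ρ Finset.univ).card := by
  rw [← Nat.card_eq_finsetCard]
  refine Nat.card_congr (Equiv.ofBijective (f := fun w : {w // w ∈ Finset.image ρ Finset.univ} =>
    Quot.mk (HGAdj E) w.1) ?_).symm
  constructor
  · rintro ⟨w, hw⟩ ⟨w', hw'⟩ h
    have hc : Conn E w w' := mk_eq_iff.1 h
    have := hρ.2 w w' hc
    apply Subtype.ext
    show w = w'
    rw [← root_fix hρ hw, ← root_fix hρ hw', this]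
  · intro c
    induction c using Quot.ind with
    | _ v =>
        exact ⟨⟨ρ v, Finset.mem_image_of_mem ρ (Finset.mem_univ v)⟩,
          mk_eq_iff.2 (conn_symm (hρ.1 v))⟩

lemma section_valid {E : Finset (Finset V)} {s : Quot (HGAdj E) → V}
    (hs : ∀ c, Quot.mk (HGAdj E) (s c) = c) :
    ValidRoot E (fun v => s (Quot.mk (HGAdj E) v)) := by
  constructor
  · intro v
    exact conn_symm (mk_eq_iff.1 (hs (Quot.mk (HGAdj E) v)))
  · intro u v huv
    exact congrArg s (mk_eq_iff.2 huv)

lemma card_statement [Fintype V] {k : ℕ} (hk : 2 ≤ k) {r m : ℕ}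
    (hn : r + (k - 1) * m = Fintype.card V) :
    Nat.card {F : (E' : Finset (Finset V)) × (Quot (HGAdj E') → V) //
        (∀ A ∈ F.1, A.card = k) ∧ ¬ HasHGCycle F.1 ∧
        Nat.card (Quot (HGAdj F.1)) = r ∧
        ∀ c, Quot.mk (HGAdj F.1) (F.2 c) = c} = Nat.card (RF V k m) := by
  apply Nat.card_congr
  refine ⟨fun F => ⟨(F.1.1, fun v => F.1.2 (Quot.mk (HGAdj F.1.1) v)),
      F.2.1, F.2.2.1, ?_, section_valid F.2.2.2.2⟩,
    fun F => ⟨⟨F.1.1, Quot.lift F.1.2 (fun a b h => F.2.2.2.2.2 a b (adj_conn h))⟩,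
      F.2.1, F.2.2.1, ?_, fun c => ?_⟩, ?_, ?_⟩
  · -- the edge count is m
    have hval := section_valid F.2.2.2.2
    have hcr := card_quot hval
    have hcomp := card_image_root hk F.1.1.card F.1.1 _ rfl F.2.1 F.2.2.1 hval
    rw [F.2.2.2.1] at hcr
    have hmul : (k - 1) * F.1.1.card = (k - 1) * m := by omega
    exact Nat.eq_of_mul_eq_mul_left (by omega) hmul
  · -- the quotient has r classes
    have hval := F.2.2.2.2
    have hcr := card_quot hval
    have hcomp := card_image_root hk m F.1.1 F.1.2 F.2.2.2.1 F.2.1 F.2.2.1 hval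
    show Nat.card (Quot (HGAdj F.1.1)) = r
    omega
  · -- section property
    induction c using Quot.ind with
    | _ v => exact mk_eq_iff.2 (conn_symm (F.2.2.2.2.1 v))
  · -- left inverse
    intro F
    apply Subtype.ext
    show Sigma.mk F.1.1 _ = F.1
    exact congrArg (Sigma.mk F.1.1) (funext fun c => by
      induction c using Quot.ind with
      | _ v => rfl)
  · -- right inverse
    intro F
    apply Subtype.ext
    apply Prod.ext
    · rfl
    · funext v
      rfl

end Quoting

end HF


/-- The number of rooted spanning hyperforests with exactly `r` components of the
complete `k`-uniform hypergraph on `n` labeled vertices equals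
`binomial(n-1, r-1) * (n-r)! / (((n-r)/(k-1))! * ((k-1)!)^((n-r)/(k-1))) * n^((n-r)/(k-1))`
when `k - 1` divides `n - r` (stated with denominators cleared), and `0` otherwise.
A rooted spanning hyperforest is a `k`-uniform hypergraph on `Fin n` with no
hypercycles, together with a choice of a root vertex in each connected component. -/
theorem complete_uniform_rooted_hyperforest_count (n k r : ℕ) (hk : 2 ≤ k)
    (hr : 1 ≤ r) (hrn : r ≤ n) :
    ((k - 1) ∣ (n - r) →
      Nat.card {F : (E' : Finset (Finset (Fin n))) × (Quot (HGAdj E') → Fin n) //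
          (∀ A ∈ F.1, A.card = k) ∧ ¬ HasHGCycle F.1 ∧
          Nat.card (Quot (HGAdj F.1)) = r ∧
          ∀ c, Quot.mk (HGAdj F.1) (F.2 c) = c} *
        (((n - r) / (k - 1)).factorial * ((k - 1).factorial) ^ ((n - r) / (k - 1))) =
        (n - 1).choose (r - 1) * (n - r).factorial * n ^ ((n - r) / (k - 1))) ∧
    (¬ (k - 1) ∣ (n - r) →
      Nat.card {F : (E' : Finset (Finset (Fin n))) × (Quot (HGAdj E') → Fin n) //
          (∀ A ∈ F.1, A.card = k) ∧ ¬ HasHGCycle F.1 ∧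
          Nat.card (Quot (HGAdj F.1)) = r ∧
          ∀ c, Quot.mk (HGAdj F.1) (F.2 c) = c} = 0) := by
  have hn1 : 1 ≤ n := le_trans hr hrn
  constructor
  · intro hdvd
    set m := (n - r) / (k - 1) with hm
    have hmk : (k - 1) * m = n - r := Nat.mul_div_cancel' hdvd
    have hn : r + (k - 1) * m = n := by omega
    have hcardV : Fintype.card (Fin n) = n := Fintype.card_fin n
    have hT := HF.card_statement (V := Fin n) hk (r := r) (m := m) (by rw [hcardV]; omega)
    rw [hT]
    have hlt : (k - 1) * m < Fintype.card (Fin n) := by rw [hcardV]; omega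
    have MAIN := HF.main_count (V := Fin n) hk m hlt
    rw [hcardV] at MAIN
    set N := Nat.card (HF.RF (Fin n) k m) with hN
    have hmc : m * (k - 1) = (k - 1) * m := Nat.mul_comm _ _
    have hr1 : n - 1 - m * (k - 1) = r - 1 := by omega
    rw [hr1] at MAIN
    apply Nat.eq_of_mul_eq_mul_right (Nat.factorial_pos (r - 1))
    have hfact := Nat.choose_mul_factorial_mul_factorial (show r - 1 ≤ n - 1 by omega)
    have hnr : n - 1 - (r - 1) = n - r := by omega
    rw [hnr] at hfact
    calc N * (m.factorial * (k - 1).factorial ^ m) * (r - 1).factorial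
        = N * (m.factorial * (k - 1).factorial ^ m * (r - 1).factorial) := by ring
      _ = n ^ m * (n - 1).factorial := MAIN
      _ = n ^ m * ((n - 1).choose (r - 1) * (r - 1).factorial * (n - r).factorial) := by
          rw [hfact]
      _ = (n - 1).choose (r - 1) * (n - r).factorial * n ^ m * (r - 1).factorial := by ring
  · intro hdvd
    rw [Nat.card_eq_zero]
    left
    rw [isEmpty_iff]
    intro F
    apply hdvd
    have hval := HF.section_valid F.2.2.2.2
    have hcr := HF.card_quot hval
    have hcomp := HF.card_image_root hk F.1.1.card F.1.1 _ rfl F.2.1 F.2.2.1 hval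
    rw [F.2.2.2.1] at hcr
    rw [Fintype.card_fin] at hcomp
    exact ⟨F.1.1.card, by omega⟩
end
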